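/- arXiv:0812.0633 — 5 statements merged into one kernel-verified Lean document; each statement's English description precedes it below -/
import Mathlib

section
/- For every β > 1 there exists a unique ζ > 0 such that tanh(β·ζ) = ζ. -/
open Real

lemma tanh_hasDerivAt (x : ℝ) : HasDerivAt Real.tanh (1 / Real.cosh x ^ 2) x := by
  have h : HasDerivAt (fun y => Real.sinh y / Real.cosh y)
      ((Real.cosh x * Real.cosh x - Real.sinh x * Real.sinh x) / Real.cosh x ^ 2) x :=
    (Real.hasDerivAt_sinh x).div (Real.hasDerivAt_cosh x) (Real.cosh_pos x).ne'
  have he : (Real.cosh x * Real.cosh x - Real.sinh x * Real.sinh x) = 1 := by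
    have := Real.cosh_sq_sub_sinh_sq x; nlinarith
  rw [he] at h
  exact h.congr_of_eventuallyEq (by filter_upwards with y; rw [Real.tanh_eq_sinh_div_cosh])

lemma tanh_lt_one' (x : ℝ) : Real.tanh x < 1 := by
  rw [Real.tanh_eq_sinh_div_cosh, div_lt_one (Real.cosh_pos x)]
  have : Real.cosh x - Real.sinh x = Real.exp (-x) := by
    rw [Real.cosh_eq, Real.sinh_eq]; ring
  nlinarith [Real.exp_pos (-x)]

lemma continuous_tanh' : Continuous Real.tanh := by
  have : Real.tanh = fun x => Real.sinh x / Real.cosh x := by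
    funext x; exact Real.tanh_eq_sinh_div_cosh x
  rw [this]
  exact Real.continuous_sinh.div Real.continuous_cosh fun x => (Real.cosh_pos x).ne'

/-- MVT for tanh on [u,v]: there is c in (u,v) with 1/cosh²c equal to the slope. -/
lemma tanh_mvt (u v : ℝ) (huv : u < v) :
    ∃ c ∈ Set.Ioo u v, 1 / Real.cosh c ^ 2 = (Real.tanh v - Real.tanh u) / (v - u) := by
  obtain ⟨c, hc, hc2⟩ := exists_hasDerivAt_eq_slope Real.tanh (fun x => 1 / Real.cosh x ^ 2) huv
    (continuous_tanh'.continuousOn) (fun x _ => tanh_hasDerivAt x)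
  exact ⟨c, hc, hc2⟩

/-- For every β > 1 there exists a unique ζ > 0 such that tanh(β·ζ) = ζ. -/
theorem stmt0 (β : ℝ) (hβ : 1 < β) :
    ∃! ζ : ℝ, 0 < ζ ∧ Real.tanh (β * ζ) = ζ := by
  have hβ0 : (0:ℝ) < β := by linarith
  set h : ℝ → ℝ := fun x => Real.tanh (β * x) - x with hh
  have hcont : Continuous h :=
    (continuous_tanh'.comp (continuous_const.mul continuous_id)).sub continuous_id
  have h0 : h 0 = 0 := by simp [hh]
  have hd0 : HasDerivAt h (β - 1) 0 := by
    have h2 : HasDerivAt (fun y : ℝ => β * y) β 0 := by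
      simpa using (hasDerivAt_id (0:ℝ)).const_mul β
    have h1 := (tanh_hasDerivAt (β * 0)).comp 0 h2
    have := h1.sub (hasDerivAt_id 0)
    have e : h = tanh ∘ HMul.hMul β - id := by funext y; simp [hh]
    rw [e]; exact this.congr_deriv (by simp)
  -- find a small positive x with h x > 0
  have hx : ∃ x : ℝ, 0 < x ∧ x < 1 ∧ 0 < h x := by
    have hdw := (hd0.hasDerivWithinAt (s := Set.Ioi 0))
    have hslope := hasDerivWithinAt_iff_tendsto_slope.mp hdw
    have hpos : ∀ᶠ y in nhdsWithin 0 (Set.Ioi 0 \ {0}), 0 < slope h 0 y :=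
      hslope.eventually (eventually_gt_nhds (by linarith))
    have hmem : ∀ᶠ y in nhdsWithin (0:ℝ) (Set.Ioi 0 \ {0}), y < 1 :=
      eventually_nhdsWithin_of_eventually_nhds
        (eventually_lt_nhds (show (0:ℝ) < 1 by norm_num))
    have hset : Set.Ioi (0:ℝ) \ {0} = Set.Ioi 0 :=
      Set.diff_singleton_eq_self (by simp)
    have hne : (nhdsWithin (0:ℝ) (Set.Ioi 0 \ {0})).NeBot := by
      rw [hset]; infer_instance
    obtain ⟨y, hy1, hy2, hy3⟩ := (hpos.and (hmem.and self_mem_nhdsWithin)).exists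
    have hy0 : 0 < y := hy3.1
    refine ⟨y, hy0, hy2, ?_⟩
    have hs : slope h 0 y = h y / y := by
      rw [slope_def_field, h0]; simp
    rw [hs] at hy1
    have := mul_pos hy1 hy0
    rwa [div_mul_cancel₀ _ hy0.ne'] at this
  obtain ⟨x, hx0, hx1, hxh⟩ := hx
  -- h 1 < 0
  have h1neg : h 1 < 0 := by
    have := tanh_lt_one' (β * 1)
    simp only [hh]; linarith
  -- IVT on [x, 1]
  obtain ⟨ζ, hζmem, hζ⟩ : ∃ ζ ∈ Set.Ioo x 1, h ζ = 0 := by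
    have : (0:ℝ) ∈ Set.Ioo (h 1) (h x) := ⟨h1neg, hxh⟩
    obtain ⟨ζ, hζ1, hζ2⟩ := intermediate_value_Ioo' hx1.le hcont.continuousOn this
    exact ⟨ζ, hζ1, hζ2⟩
  have hζ0 : 0 < ζ := lt_trans hx0 hζmem.1
  have hζfix : Real.tanh (β * ζ) = ζ := by
    have : Real.tanh (β * ζ) - ζ = 0 := hζ
    linarith
  refine ⟨ζ, ⟨hζ0, hζfix⟩, ?_⟩
  -- uniqueness
  rintro b ⟨hb0, hbfix⟩
  by_contra hne
  -- wlog-like: two distinct positive fixed points a < b'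
  have key : ∀ a b : ℝ, 0 < a → a < b → Real.tanh (β * a) = a → Real.tanh (β * b) = b → False := by
    intro a b ha hab hfa hfb
    have hba : β * a < β * b := by nlinarith
    have h0a : (0:ℝ) < β * a := by positivity
    obtain ⟨c, hc, hceq⟩ := tanh_mvt 0 (β * a) h0a
    obtain ⟨c', hc', hceq'⟩ := tanh_mvt (β * a) (β * b) hba
    rw [Real.tanh_zero, hfa] at hceq
    rw [hfa, hfb] at hceq'
    have e1 : 1 / Real.cosh c ^ 2 = 1 / β := by
      rw [hceq]; field_simp; ring
    have e2 : 1 / Real.cosh c' ^ 2 = 1 / β := by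
      have hba' : b - a ≠ 0 := by linarith
      rw [hceq', show β * b - β * a = (b - a) * β by ring, ← div_div, div_self hba']
    have hcc' : c < c' := lt_trans hc.2 hc'.1
    have hcosh : Real.cosh c < Real.cosh c' := by
      have h1 : |c| < |c'| := by
        rw [abs_of_pos hc.1, abs_of_pos (lt_trans h0a hc'.1)]; exact hcc'
      exact Real.cosh_lt_cosh.mpr h1
    have hp : (0:ℝ) < Real.cosh c := Real.cosh_pos c
    have hp' : (0:ℝ) < Real.cosh c' := Real.cosh_pos c'
    have : Real.cosh c ^ 2 = Real.cosh c' ^ 2 := by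
      have := e1.trans e2.symm
      field_simp at this
      linarith
    nlinarith
  rcases lt_or_gt_of_ne hne with hlt | hgt
  · exact key b ζ hb0 hlt hbfix hζfix
  · exact key ζ b hζ0 hgt hζfix hbfix
end

section
/- Let (W_t) be a nonnegative supermartingale with W₀ = k, increments bounded above by B (W_{t+1} − W_t ≤ B almost surely), and let τ be a stopping time such that Var(W_{t+1} | F_t) > σ² > 0 on the event {τ > t}. Then for any u > 4B²/(3σ²), P(τ > u) ≤ 4k/(σ·√u). -/
set_option maxHeartbeats 1000000


open MeasureTheory

section helpers
private lemma telescope_aux (g : ℕ → ℝ) (r : ℕ) :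
    ∀ n : ℕ, (∑ t ∈ Finset.range n, if t < r then g (t + 1) - g t else 0)
      = g (min r n) - g 0 := by
  intro n
  induction n with
  | zero => simp
  | succ n ih =>
    rw [Finset.sum_range_succ, ih]
    by_cases h : n < r
    · rw [if_pos h, min_eq_right (by omega : n ≤ r), min_eq_right (by omega : n + 1 ≤ r)]
      ring
    · rw [if_neg h, min_eq_left (by omega : r ≤ n), min_eq_left (by omega : r ≤ n + 1)]
      ring
end helpers


private lemma condexp_sq_expand {Ω : Type*} {m0 : MeasurableSpace Ω} {μ : Measure Ω}
    [IsProbabilityMeasure μ] {m : MeasurableSpace Ω} (hm : m ≤ m0)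
    (C D : ℝ) (hD : 0 ≤ D) (X : Ω → ℝ) (hXmeas : AEStronglyMeasurable[m0] X μ)
    (hXb : ∀ᵐ ω ∂μ, |X ω| ≤ D) :
    μ[fun ω => (C - X ω) ^ 2|m] =ᵐ[μ]
      fun ω => (μ[fun ω' => (X ω' - (μ[X|m]) ω') ^ 2|m]) ω + (C - (μ[X|m]) ω) ^ 2 := by
  have bint : ∀ (f : Ω → ℝ) (c : ℝ), AEStronglyMeasurable[m0] f μ → (∀ᵐ ω ∂μ, |f ω| ≤ c) →
      Integrable f μ :=
    fun f c hf hb => (integrable_const c).mono' hf (by simpa [Real.norm_eq_abs] using hb)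
  have sqm : ∀ {f : Ω → ℝ}, AEStronglyMeasurable[m0] f μ → AEStronglyMeasurable[m0] (fun ω => (f ω) ^ 2) μ :=
    fun {f} hf => by simp only [pow_two]; exact hf.mul hf
  set mX : Ω → ℝ := μ[X|m] with hmXdef
  have hXint : Integrable X μ := bint X D hXmeas hXb
  have hmXsm : StronglyMeasurable[m] mX := stronglyMeasurable_condExp
  have hmXmeas : AEStronglyMeasurable[m0] mX μ := (hmXsm.mono hm).aestronglyMeasurable
  have hmXint : Integrable mX μ := integrable_condExp
  have hmXb : ∀ᵐ ω ∂μ, |mX ω| ≤ D := by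
    have hup : mX ≤ᵐ[μ] fun _ => D := by
      have h1 := condExp_mono (μ := μ) (m := m) hXint (integrable_const D)
        (hXb.mono fun ω h => (abs_le.1 h).2)
      rwa [condExp_const hm] at h1
    have hlo : (fun _ => -D) ≤ᵐ[μ] mX := by
      have h1 := condExp_mono (μ := μ) (m := m) (integrable_const (-D)) hXint
        (hXb.mono fun ω h => (abs_le.1 h).1)
      rwa [condExp_const hm] at h1
    filter_upwards [hup, hlo] with ω h1 h2
    exact abs_le.mpr ⟨h2, h1⟩
  -- component functions
  set F1 : Ω → ℝ := fun ω => (X ω - mX ω) ^ 2 with hF1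
  set F3 : Ω → ℝ := fun ω => (C - mX ω) ^ 2 with hF3
  set F5 : Ω → ℝ := fun ω => X ω - mX ω with hF5
  set F4 : Ω → ℝ := (fun ω => C - mX ω) * F5 with hF4
  have hF4' : ∀ ω, F4 ω = (C - mX ω) * (X ω - mX ω) := fun ω => rfl
  -- integrability
  have habsC : ∀ᵐ ω ∂μ, |C - mX ω| ≤ |C| + D := by
    filter_upwards [hmXb] with ω h
    have h' := abs_le.1 h
    exact abs_le.mpr ⟨by nlinarith [le_abs_self C, neg_abs_le C],
      by nlinarith [le_abs_self C, neg_abs_le C]⟩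
  have habs5 : ∀ᵐ ω ∂μ, |F5 ω| ≤ 2 * D := by
    filter_upwards [hXb, hmXb] with ω h1 h2
    have h1' := abs_le.1 h1; have h2' := abs_le.1 h2
    exact abs_le.mpr ⟨by simp only [hF5]; linarith, by simp only [hF5]; linarith⟩
  have hF5meas : AEStronglyMeasurable[m0] F5 μ := hXmeas.sub hmXmeas
  have IF5 : Integrable F5 μ := bint F5 (2 * D) hF5meas habs5
  have IF1 : Integrable F1 μ := by
    refine bint F1 ((2 * D) ^ 2) (sqm hF5meas) ?_
    filter_upwards [habs5] with ω h
    rw [hF1]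
    calc |(X ω - mX ω) ^ 2| = |F5 ω| ^ 2 := by rw [← abs_pow]
    _ ≤ (2 * D) ^ 2 := by nlinarith [abs_nonneg (F5 ω)]
  have IF3 : Integrable F3 μ := by
    refine bint F3 ((|C| + D) ^ 2) (sqm (aestronglyMeasurable_const.sub hmXmeas)) ?_
    filter_upwards [habsC] with ω h
    calc |(C - mX ω) ^ 2| = |C - mX ω| ^ 2 := by rw [← abs_pow]
    _ ≤ (|C| + D) ^ 2 := by nlinarith [abs_nonneg (C - mX ω)]
  have IF4 : Integrable F4 μ := by
    refine bint F4 ((|C| + D) * (2 * D)) ((aestronglyMeasurable_const.sub hmXmeas).mul hF5meas) ?_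
    filter_upwards [habsC, habs5] with ω h1 h2
    rw [hF4', abs_mul]
    exact mul_le_mul h1 h2 (abs_nonneg _) (by positivity)
  have IF24 : Integrable ((2:ℝ) • F4) μ := IF4.smul (2:ℝ)
  have IF2 : Integrable (F3 - (2:ℝ) • F4) μ := IF3.sub IF24
  have hs : (fun ω => (C - X ω) ^ 2) = F1 + (F3 - (2:ℝ) • F4) := by
    funext ω
    simp only [Pi.add_apply, Pi.sub_apply, Pi.smul_apply, smul_eq_mul, hF1, hF3, hF4', hF5]
    ring
  rw [hs]
  have e1 := condExp_add (μ := μ) (m := m) IF1 IF2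
  have e2 := condExp_sub (μ := μ) (m := m) IF3 IF24
  have e3 := condExp_smul (μ := μ) (m := m) (2:ℝ) F4
  have e4 : μ[F3|m] = F3 :=
    condExp_of_stronglyMeasurable hm ((stronglyMeasurable_const.sub hmXsm).pow 2) IF3
  have e5 := condExp_mul_of_stronglyMeasurable_left (μ := μ) (f := fun ω => C - mX ω) (g := F5)
    (stronglyMeasurable_const.sub hmXsm) IF4 IF5
  have e6 : μ[F5|m] =ᵐ[μ] mX - mX := by
    have : F5 = X - mX := rfl
    rw [this]
    have := condExp_sub (μ := μ) (m := m) hXint hmXint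
    refine this.trans ?_
    rw [condExp_of_stronglyMeasurable hm hmXsm hmXint, ← hmXdef]
  filter_upwards [e1, e2, e3, e5, e6] with ω h1 h2 h3 h5 h6
  rw [← hF4] at h5
  rw [h1]
  simp only [Pi.add_apply, Pi.sub_apply, Pi.smul_apply, Pi.mul_apply, smul_eq_mul] at h2 h3 h5 h6 ⊢
  rw [h2, h3, h5, h6, e4]
  simp only [hF3]
  ring


/-- A nonnegative supermartingale started at k, with increments bounded by B
    and conditional variance exceeding σ² before the stopping time τ,
    satisfies P(τ > u) ≤ 4k/(σ√u) for u > 4B²/(3σ²). -/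
theorem stmt9 {Ω : Type*} {m0 : MeasurableSpace Ω} {μ : Measure Ω}
    [IsProbabilityMeasure μ]
    (ℱ : Filtration ℕ m0) (W : ℕ → Ω → ℝ) (τ : Ω → ℕ)
    (k B σ u : ℝ) (hk : 0 ≤ k) (hB : 0 < B) (hσ : 0 < σ)
    (hsup : Supermartingale W ℱ μ)
    (hnn : ∀ t, ∀ᵐ ω ∂μ, 0 ≤ W t ω)
    (h0 : ∀ᵐ ω ∂μ, W 0 ω = k)
    (hinc : ∀ t, ∀ᵐ ω ∂μ, W (t + 1) ω - W t ω ≤ B)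
    (hstop : IsStoppingTime ℱ (fun ω => (τ ω : WithTop ℕ)))
    (hvar : ∀ t, ∀ᵐ ω ∂μ, t < τ ω →
      σ ^ 2 < (μ[fun ω' => (W (t + 1) ω' - (μ[W (t + 1)|ℱ t]) ω') ^ 2|ℱ t]) ω)
    (hu : 4 * B ^ 2 / (3 * σ ^ 2) < u) :
    (μ {ω | u < (τ ω : ℝ)}).toReal ≤ 4 * k / (σ * Real.sqrt u) := by
  classical
  have hle := ℱ.le
  have hu0 : 0 < u := lt_trans (by positivity) hu
  have hsqu : 0 < Real.sqrt u := Real.sqrt_pos.2 hu0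
  set M : ℝ := σ * Real.sqrt u with hMdef
  have hM0 : 0 < M := by positivity
  have hMsq : M ^ 2 = σ ^ 2 * u := by
    rw [hMdef, mul_pow, Real.sq_sqrt hu0.le]
  have hBM : B < M := by
    have h4 : 4 * B ^ 2 < 3 * σ ^ 2 * u := by
      have h3 : (0:ℝ) < 3 * σ ^ 2 := by positivity
      calc 4 * B ^ 2 = 4 * B ^ 2 / (3 * σ ^ 2) * (3 * σ ^ 2) := by field_simp
        _ < u * (3 * σ ^ 2) := mul_lt_mul_of_pos_right hu h3
        _ = 3 * σ ^ 2 * u := by ring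
    have hB2 : B ^ 2 < M ^ 2 := by nlinarith
    exact lt_of_pow_lt_pow_left₀ 2 hM0.le hB2
  -- trivial case : k ≥ M
  rcases le_or_gt M k with hkM | hkM
  · have h1 : (μ {ω | u < (τ ω : ℝ)}).toReal ≤ 1 := by
      have h2 : μ {ω | u < (τ ω : ℝ)} ≤ 1 := prob_le_one
      simpa using ENNReal.toReal_mono ENNReal.one_ne_top h2
    have h2 : (1:ℝ) ≤ 4 * k / M := by
      rw [le_div_iff₀ hM0]
      nlinarith
    calc (μ {ω | u < (τ ω : ℝ)}).toReal ≤ 1 := h1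
      _ ≤ 4 * k / M := h2
  -- main case
  set n : ℕ := ⌈u⌉₊ with hndef
  have hn1 : 1 ≤ n := Nat.ceil_pos.mpr hu0
  have hun : u ≤ (n : ℝ) := Nat.le_ceil u
  set C : ℝ := M + B with hCdef
  have hC0 : 0 < C := by positivity
  have hMC : M ≤ C := by simp [hCdef]; linarith
  -- the truncated hitting time of level M, and the stopped time ρ
  set T : Ω → ℕ := fun ω => sInf ({t | M ≤ W t ω} ∪ {n}) with hTdef
  have hTn : ∀ ω, T ω ≤ n := fun ω => Nat.sInf_le (Or.inr rfl)
  have hTlt : ∀ ω t, t < T ω → W t ω < M := by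
    intro ω t ht
    by_contra hc
    push_neg at hc
    have h2 : T ω ≤ t := Nat.sInf_le (Or.inl hc)
    omega
  have hTmem : ∀ ω, T ω < n → M ≤ W (T ω) ω := by
    intro ω hTw
    have hne : ({t | M ≤ W t ω} ∪ {n} : Set ℕ).Nonempty := ⟨n, Or.inr rfl⟩
    have hmem : T ω ∈ ({t | M ≤ W t ω} ∪ {n} : Set ℕ) := Nat.sInf_mem hne
    rcases hmem with h | h
    · exact h
    · simp only [Set.mem_singleton_iff] at h
      omega
  set ρ : Ω → ℕ := fun ω => min (τ ω) (T ω) with hρdef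
  have hρn : ∀ ω, ρ ω ≤ n := fun ω => le_trans (min_le_right _ _) (hTn ω)
  set E : ℕ → Set Ω := fun t => {ω | t < ρ ω} with hEdef
  -- measurability
  have hWm : ∀ t, StronglyMeasurable[ℱ t] (W t) := fun t => hsup.1 t
  have hWm0 : ∀ t, Measurable (W t) := fun t => ((hWm t).measurable).mono (hle t) le_rfl
  have hEm : ∀ t, t < n → MeasurableSet[ℱ t] (E t) := by
    intro t htn
    have h1 : MeasurableSet[ℱ t] {ω | t < τ ω} := by
      have := (hstop t).compl
      convert this using 1
      ext ω
      simp [not_le]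
    have h2 : MeasurableSet[ℱ t] {ω | t < T ω} := by
      have heq : {ω | t < T ω} = ⋂ s ∈ Finset.range (t + 1), {ω | W s ω < M} := by
        ext ω
        simp only [Set.mem_iInter, Finset.mem_range, Set.mem_setOf_eq]
        constructor
        · intro h s hs
          exact hTlt ω s (by omega)
        · intro h
          by_contra hc
          push_neg at hc
          have hTle : T ω ≤ t := by omega
          have hTlt' : T ω < n := by omega
          exact absurd (hTmem ω hTlt') (not_le.mpr (h (T ω) (by omega)))
      rw [heq]
      refine Finset.measurableSet_biInter _ fun s hs => ?_
      have : MeasurableSet[ℱ s] {ω | W s ω < M} := (hWm s).measurable measurableSet_Iio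
      exact ℱ.mono (by simp at hs; omega) _ this
    have heq : E t = {ω | t < τ ω} ∩ {ω | t < T ω} := by
      ext ω
      simp [hEdef, hρdef, lt_min_iff]
    rw [heq]
    exact h1.inter h2
  have hEm0 : ∀ t, t < n → MeasurableSet (E t) := fun t ht => hle t _ (hEm t ht)
  have hτmeas : Measurable τ :=
    measurable_to_countable' fun j => hle j _ (by simpa [Set.preimage] using hstop.measurableSet_eq j)
  have hTmeas : Measurable T := by
    apply measurable_to_countable'
    intro j
    rcases lt_trichotomy j n with hj | hj | hj
    · have heq : T ⁻¹' {j} = {ω | M ≤ W j ω} ∩ ⋂ s ∈ Finset.range j, {ω | W s ω < M} := by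
        ext ω
        simp only [Set.mem_preimage, Set.mem_singleton_iff, Set.mem_inter_iff,
          Set.mem_iInter, Finset.mem_range, Set.mem_setOf_eq]
        constructor
        · intro h
          exact ⟨h ▸ hTmem ω (h ▸ hj), fun s hs => hTlt ω s (by omega)⟩
        · rintro ⟨hMle, hall⟩
          have hTle : T ω ≤ j := Nat.sInf_le (Or.inl hMle)
          by_contra hne
          have hTlt' : T ω < j := by omega
          exact absurd (hTmem ω (by omega)) (not_le.mpr (hall (T ω) hTlt'))
      rw [heq]
      exact ((hWm0 j) measurableSet_Ici).inter
        (Finset.measurableSet_biInter _ fun s _ => (hWm0 s) measurableSet_Iio)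
    · have heq : T ⁻¹' {j} = ⋂ s ∈ Finset.range n, {ω | W s ω < M} := by
        subst hj
        ext ω
        simp only [Set.mem_preimage, Set.mem_singleton_iff, Set.mem_iInter,
          Finset.mem_range, Set.mem_setOf_eq]
        constructor
        · intro h s hs
          exact hTlt ω s (by omega)
        · intro hall
          have h1 := hTn ω
          by_contra hne
          exact absurd (hTmem ω (by omega)) (not_le.mpr (hall (T ω) (by omega)))
      rw [heq]
      exact Finset.measurableSet_biInter _ fun s _ => (hWm0 s) measurableSet_Iio
    · have heq : T ⁻¹' {j} = ∅ := by
        ext ω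
        simp only [Set.mem_preimage, Set.mem_singleton_iff, Set.mem_empty_iff_false,
          iff_false]
        intro h
        have := hTn ω
        omega
      rw [heq]
      exact MeasurableSet.empty
  have hρmeas : Measurable ρ := hτmeas.min hTmeas
  have hVmeas : Measurable (fun ω => W (ρ ω) ω) := by
    have hVeq : (fun ω => W (ρ ω) ω)
        = fun ω => ∑ j ∈ Finset.range (n + 1), if ρ ω = j then W j ω else 0 := by
      funext ω
      rw [Finset.sum_eq_single (ρ ω)]
      · simp
      · intro j _ hne
        exact if_neg fun h => hne h.symm
      · intro hmem
        exact absurd (Finset.mem_range.mpr (by have := hρn ω; omega)) hmem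
    rw [hVeq]
    exact Finset.measurable_sum _ fun j _ =>
      Measurable.ite (hρmeas (MeasurableSet.singleton j)) (hWm0 j) measurable_const
  set A : Set Ω := {ω | M ≤ W (ρ ω) ω} with hAdef
  have hAmeas : MeasurableSet A := hVmeas measurableSet_Ici
  set S : Set Ω := {ω | u < (τ ω : ℝ)} with hSdef
  have hSmeas : MeasurableSet S := by
    have : S = τ ⁻¹' {j : ℕ | u < (j : ℝ)} := rfl
    rw [this]
    exact hτmeas (by measurability)
  -- a.e. facts
  have bint : ∀ (f : Ω → ℝ) (c : ℝ), AEStronglyMeasurable f μ → (∀ᵐ ω ∂μ, |f ω| ≤ c) →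
      Integrable f μ :=
    fun f c hf hb => (integrable_const c).mono' hf (by simpa [Real.norm_eq_abs] using hb)
  have sqm : ∀ {f : Ω → ℝ}, AEStronglyMeasurable f μ → AEStronglyMeasurable (fun ω => (f ω) ^ 2) μ :=
    fun {f} hf => by simp only [pow_two]; exact hf.mul hf
  have haeW : ∀ᵐ ω ∂μ, (∀ t, 0 ≤ W t ω) ∧ W 0 ω = k ∧ (∀ t, W (t + 1) ω ≤ W t ω + B) := by
    filter_upwards [ae_all_iff.2 hnn, h0, ae_all_iff.2 hinc] with ω h1 h2 h3
    exact ⟨h1, h2, fun t => by linarith [h3 t]⟩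
  have haeWb : ∀ᵐ ω ∂μ, ∀ t, W t ω ≤ k + t * B := by
    filter_upwards [haeW] with ω hω
    obtain ⟨h1, h2, h3⟩ := hω
    intro t
    induction t with
    | zero => simp [h2]
    | succ t ih =>
      have := h3 t
      push_cast
      push_cast at ih
      linarith
  have hIsq : ∀ t, Integrable (fun ω => (C - W t ω) ^ 2) μ := by
    intro t
    refine bint _ ((|C| + (k + t * B)) ^ 2)
      (sqm (aestronglyMeasurable_const.sub ((hWm0 t).aestronglyMeasurable))) ?_
    filter_upwards [haeW, haeWb] with ω h1 h2
    have h3 : 0 ≤ W t ω := h1.1 t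
    have h4 : W t ω ≤ k + t * B := h2 t
    have habs : |C - W t ω| ≤ |C| + (k + t * B) :=
      abs_le.mpr ⟨by nlinarith [le_abs_self C, neg_abs_le C],
        by nlinarith [le_abs_self C, neg_abs_le C]⟩
    calc |(C - W t ω) ^ 2| = |C - W t ω| ^ 2 := by rw [← abs_pow]
      _ ≤ (|C| + (k + t * B)) ^ 2 := pow_le_pow_left₀ (abs_nonneg _) habs 2
  have hIdiff : ∀ t, Integrable (fun ω => (C - W (t + 1) ω) ^ 2 - (C - W t ω) ^ 2) μ :=
    fun t => (hIsq (t + 1)).sub (hIsq t)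
  -- the per-step inequality
  have hstep : ∀ t, t < n →
      σ ^ 2 * (μ (E t)).toReal + ∫ ω in E t, (C - W t ω) ^ 2 ∂μ
        ≤ ∫ ω in E t, (C - W (t + 1) ω) ^ 2 ∂μ := by
    intro t htn
    have hEmt := hEm t htn
    have hEm0t := hEm0 t htn
    have hD0 : (0:ℝ) ≤ k + (↑(t + 1)) * B := by positivity
    have hXb : ∀ᵐ ω ∂μ, |W (t + 1) ω| ≤ k + (↑(t + 1)) * B := by
      filter_upwards [haeW, haeWb] with ω h1 h2
      exact abs_le.mpr ⟨by linarith [h1.1 (t + 1)], h2 (t + 1)⟩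
    have hexp := condexp_sq_expand (hle t) C (k + (↑(t + 1)) * B) hD0 (W (t + 1))
      ((hWm0 (t + 1)).aestronglyMeasurable) hXb
    have hm0' : (0:Ω → ℝ) ≤ᵐ[μ] μ[W (t + 1)|ℱ t] := condExp_nonneg (hnn (t + 1))
    have hmle : μ[W (t + 1)|ℱ t] ≤ᵐ[μ] W t := hsup.2.1 t (t + 1) (Nat.le_succ t)
    have hkey : ∀ᵐ ω ∂μ, ω ∈ E t →
        σ ^ 2 + (C - W t ω) ^ 2 ≤ (μ[fun ω' => (C - W (t + 1) ω') ^ 2|ℱ t]) ω := by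
      filter_upwards [hexp, hvar t, hm0', hmle] with ω he hv hm1 hm2
      intro hE
      have hE' : t < ρ ω := hE
      have ht1 : t < τ ω := lt_of_lt_of_le hE' (min_le_left _ _)
      have ht2 : t < T ω := lt_of_lt_of_le hE' (min_le_right _ _)
      have hWt : W t ω < M := hTlt ω t ht2
      have hv' := hv ht1
      rw [he]
      have hsq : (C - W t ω) ^ 2 ≤ (C - (μ[W (t + 1)|ℱ t]) ω) ^ 2 := by
        have hp1 : 0 ≤ C - W t ω := by linarith
        have hp2 : C - W t ω ≤ C - (μ[W (t + 1)|ℱ t]) ω := by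
          have := hm2
          simp only [Pi.zero_apply] at hm1
          linarith
        exact pow_le_pow_left₀ hp1 hp2 2
      linarith
    have h1 : ∫ ω in E t, (σ ^ 2 + (C - W t ω) ^ 2) ∂μ
        ≤ ∫ ω in E t, (μ[fun ω' => (C - W (t + 1) ω') ^ 2|ℱ t]) ω ∂μ :=
      setIntegral_mono_ae_restrict ((integrable_const _).add (hIsq t)).integrableOn
        integrable_condExp.integrableOn ((ae_restrict_iff' hEm0t).2 hkey)
    have h2 : ∫ ω in E t, (μ[fun ω' => (C - W (t + 1) ω') ^ 2|ℱ t]) ω ∂μ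
        = ∫ ω in E t, (C - W (t + 1) ω) ^ 2 ∂μ :=
      setIntegral_condExp (hle t) (hIsq (t + 1)) hEmt
    have h3 : ∫ ω in E t, (σ ^ 2 + (C - W t ω) ^ 2) ∂μ
        = σ ^ 2 * (μ (E t)).toReal + ∫ ω in E t, (C - W t ω) ^ 2 ∂μ := by
      rw [integral_add (integrable_const _).integrableOn (hIsq t).integrableOn,
        setIntegral_const, smul_eq_mul, measureReal_def]
      ring
    linarith
  -- telescoping
  have htel : ∀ ω, (∑ t ∈ Finset.range n,
      Set.indicator (E t) (fun ω' => (C - W (t + 1) ω') ^ 2 - (C - W t ω') ^ 2) ω)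
      = (C - W (ρ ω) ω) ^ 2 - (C - W 0 ω) ^ 2 := by
    intro ω
    have hind : ∀ t ∈ Finset.range n,
        Set.indicator (E t) (fun ω' => (C - W (t + 1) ω') ^ 2 - (C - W t ω') ^ 2) ω
        = if t < ρ ω then (C - W (t + 1) ω) ^ 2 - (C - W t ω) ^ 2 else 0 := by
      intro t _
      by_cases h : t < ρ ω
      · rw [if_pos h, Set.indicator_of_mem (show ω ∈ E t from h)]
      · rw [if_neg h, Set.indicator_of_notMem (show ω ∉ E t from h)]
    rw [Finset.sum_congr rfl hind]
    have h2 := telescope_aux (fun t => (C - W t ω) ^ 2) (ρ ω) n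
    rw [min_eq_left (hρn ω)] at h2
    exact h2
  have hsum2 : ∑ t ∈ Finset.range n, ∫ ω in E t, ((C - W (t + 1) ω) ^ 2 - (C - W t ω) ^ 2) ∂μ
      = ∫ ω, ((C - W (ρ ω) ω) ^ 2 - (C - W 0 ω) ^ 2) ∂μ := by
    have h1 : ∀ t ∈ Finset.range n,
        ∫ ω in E t, ((C - W (t + 1) ω) ^ 2 - (C - W t ω) ^ 2) ∂μ
        = ∫ ω, Set.indicator (E t) (fun ω' => (C - W (t + 1) ω') ^ 2 - (C - W t ω') ^ 2) ω ∂μ :=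
      fun t ht => (integral_indicator (hEm0 t (Finset.mem_range.mp ht))).symm
    rw [Finset.sum_congr rfl h1, ← integral_finset_sum]
    · congr 1
      funext ω
      exact htel ω
    · exact fun t ht => (hIdiff t).indicator (hEm0 t (Finset.mem_range.mp ht))
  have hVint : Integrable (fun ω => (C - W (ρ ω) ω) ^ 2 - (C - W 0 ω) ^ 2) μ := by
    have heq : (fun ω => (C - W (ρ ω) ω) ^ 2 - (C - W 0 ω) ^ 2)
        = fun ω => ∑ t ∈ Finset.range n,
            Set.indicator (E t) (fun ω' => (C - W (t + 1) ω') ^ 2 - (C - W t ω') ^ 2) ω := by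
      funext ω
      exact (htel ω).symm
    rw [heq]
    exact integrable_finset_sum _ fun t ht => (hIdiff t).indicator (hEm0 t (Finset.mem_range.mp ht))
  -- a.e. bound on the stopped value
  have haeρ : ∀ᵐ ω ∂μ, 0 ≤ W (ρ ω) ω ∧ W (ρ ω) ω ≤ C := by
    filter_upwards [haeW] with ω hω
    obtain ⟨h1, h2, h3⟩ := hω
    refine ⟨h1 _, ?_⟩
    have hT1 : 1 ≤ T ω := by
      by_contra hc
      have hT0 : T ω = 0 := by omega
      have hmem : T ω ∈ ({t | M ≤ W t ω} ∪ {n} : Set ℕ) := Nat.sInf_mem ⟨n, Or.inr rfl⟩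
      rw [hT0] at hmem
      rcases hmem with h | h
      · simp only [Set.mem_setOf_eq] at h
        rw [h2] at h
        linarith
      · simp only [Set.mem_singleton_iff] at h
        omega
    have hρω : ρ ω = min (τ ω) (T ω) := rfl
    by_cases hcase : ρ ω < T ω
    · have := hTlt ω (ρ ω) hcase
      linarith
    · have hρT : ρ ω = T ω := by omega
      have hW1 : W (T ω - 1) ω < M := hTlt ω (T ω - 1) (by omega)
      have hW2 : W (T ω - 1 + 1) ω ≤ W (T ω - 1) ω + B := h3 _
      have hT1' : T ω - 1 + 1 = T ω := by omega
      rw [hT1'] at hW2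
      rw [hρT]
      rw [hCdef]
      linarith
  -- the inclusion S \ A ⊆ E t
  have hQ : ∀ t, t < n → S \ A ⊆ E t := by
    intro t htn ω hω
    obtain ⟨hS', hA'⟩ := hω
    have hτu : u < (τ ω : ℝ) := hS'
    have hτn : n ≤ τ ω := Nat.ceil_le.mpr hτu.le
    show t < ρ ω
    have hρω : ρ ω = min (τ ω) (T ω) := rfl
    by_contra hc
    push_neg at hc
    have hρT : ρ ω = T ω := by omega
    have hTn' : T ω < n := by omega
    have hM' := hTmem ω hTn'
    rw [← hρT] at hM'
    exact hA' hM'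
  -- put everything together
  set q : ℝ := (μ (S \ A)).toReal with hqdef
  set a : ℝ := (μ A).toReal with hadef
  set a' : ℝ := (μ Aᶜ).toReal with ha'def
  have hq0 : 0 ≤ q := ENNReal.toReal_nonneg
  have ha0 : 0 ≤ a := ENNReal.toReal_nonneg
  have ha'0 : 0 ≤ a' := ENNReal.toReal_nonneg
  have hlow : ∀ t, t < n → σ ^ 2 * q ≤ σ ^ 2 * (μ (E t)).toReal := by
    intro t htn
    exact mul_le_mul_of_nonneg_left
      (ENNReal.toReal_mono (measure_ne_top μ _) (measure_mono (hQ t htn))) (sq_nonneg σ)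
  have hmain : (n : ℝ) * (σ ^ 2 * q) ≤ B ^ 2 * a + C ^ 2 * a' - (C - k) ^ 2 := by
    have hsum1 : (n : ℝ) * (σ ^ 2 * q)
        ≤ ∑ t ∈ Finset.range n, ∫ ω in E t, ((C - W (t + 1) ω) ^ 2 - (C - W t ω) ^ 2) ∂μ := by
      have h1 : ∀ t ∈ Finset.range n,
          σ ^ 2 * q ≤ ∫ ω in E t, ((C - W (t + 1) ω) ^ 2 - (C - W t ω) ^ 2) ∂μ := by
        intro t ht
        have htn := Finset.mem_range.mp ht
        have h2 := hstep t htn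
        have h3 : ∫ ω in E t, ((C - W (t + 1) ω) ^ 2 - (C - W t ω) ^ 2) ∂μ
            = ∫ ω in E t, (C - W (t + 1) ω) ^ 2 ∂μ - ∫ ω in E t, (C - W t ω) ^ 2 ∂μ :=
          integral_sub (hIsq (t + 1)).integrableOn (hIsq t).integrableOn
        have h4 := hlow t htn
        linarith
      calc (n : ℝ) * (σ ^ 2 * q) = ∑ _t ∈ Finset.range n, σ ^ 2 * q := by
            rw [Finset.sum_const, Finset.card_range, nsmul_eq_mul]
        _ ≤ _ := Finset.sum_le_sum h1
    rw [hsum2] at hsum1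
    have hub : ∀ᵐ ω ∂μ, (C - W (ρ ω) ω) ^ 2 - (C - W 0 ω) ^ 2
        ≤ Set.indicator A (fun _ => B ^ 2) ω + Set.indicator Aᶜ (fun _ => C ^ 2) ω
          - (C - k) ^ 2 := by
      filter_upwards [haeρ, h0] with ω hρb h2
      obtain ⟨hρ0, hρC⟩ := hρb
      rw [h2]
      by_cases hA' : ω ∈ A
      · rw [Set.indicator_of_mem hA', Set.indicator_of_notMem (by simp [hA'] : ω ∉ Aᶜ)]
        have hM' : M ≤ W (ρ ω) ω := hA'
        have hb2 : (C - W (ρ ω) ω) ^ 2 ≤ B ^ 2 := by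
          have h5 : C - W (ρ ω) ω ≤ B := by rw [hCdef]; linarith
          have h6 : 0 ≤ C - W (ρ ω) ω := by linarith
          nlinarith
        linarith
      · rw [Set.indicator_of_notMem hA', Set.indicator_of_mem (by simp [hA'] : ω ∈ Aᶜ)]
        have hb2 : (C - W (ρ ω) ω) ^ 2 ≤ C ^ 2 := by nlinarith
        linarith
    have hRint : Integrable (fun ω => Set.indicator A (fun _ => B ^ 2) ω
        + Set.indicator Aᶜ (fun _ => C ^ 2) ω - (C - k) ^ 2) μ :=
      (((integrable_const _).indicator hAmeas).add
        ((integrable_const _).indicator hAmeas.compl)).sub (integrable_const _)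
    have h7 := integral_mono_ae hVint hRint hub
    have i1 : Integrable (fun ω => Set.indicator A (fun _ => B ^ 2) ω) μ :=
      (integrable_const _).indicator hAmeas
    have i2 : Integrable (fun ω => Set.indicator Aᶜ (fun _ => C ^ 2) ω) μ :=
      (integrable_const _).indicator hAmeas.compl
    have h8 : ∫ ω, (Set.indicator A (fun _ => B ^ 2) ω + Set.indicator Aᶜ (fun _ => C ^ 2) ω
        - (C - k) ^ 2) ∂μ = B ^ 2 * a + C ^ 2 * a' - (C - k) ^ 2 := by
      have e2 : ∫ ω, Set.indicator A (fun _ => B ^ 2) ω ∂μ = a * B ^ 2 := by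
        rw [integral_indicator_const _ hAmeas]
        simp [smul_eq_mul, measureReal_def, hadef]
      have e3 : ∫ ω, Set.indicator Aᶜ (fun _ => C ^ 2) ω ∂μ = a' * C ^ 2 := by
        rw [integral_indicator_const _ hAmeas.compl]
        simp [smul_eq_mul, measureReal_def, ha'def]
      have e4 : ∫ _ω : Ω, (C - k) ^ 2 ∂μ = (C - k) ^ 2 := by simp
      refine Eq.trans (integral_sub (by exact i1.add i2) (integrable_const _)) ?_
      rw [integral_add i1 i2, e2, e3, e4]
      ring
    linarith
  have hPa : (μ S).toReal ≤ a + q := by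
    have h1 : μ S ≤ μ A + μ (S \ A) := by
      refine le_trans (measure_mono ?_) (measure_union_le _ _)
      intro ω hω
      by_cases h : ω ∈ A
      · exact Or.inl h
      · exact Or.inr ⟨hω, h⟩
    calc (μ S).toReal ≤ (μ A + μ (S \ A)).toReal :=
          ENNReal.toReal_mono (ENNReal.add_ne_top.mpr ⟨measure_ne_top μ _, measure_ne_top μ _⟩) h1
      _ = a + q := ENNReal.toReal_add (measure_ne_top μ _) (measure_ne_top μ _)
  have haa' : a + a' = 1 := by
    rw [hadef, ha'def, ← ENNReal.toReal_add (measure_ne_top μ _) (measure_ne_top μ _),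
      measure_add_measure_compl hAmeas]
    simp
  have hP0 : 0 ≤ (μ S).toReal := ENNReal.toReal_nonneg
  have hq2 : σ ^ 2 * u * q ≤ (n : ℝ) * (σ ^ 2 * q) := by
    nlinarith [mul_nonneg (mul_nonneg (sq_nonneg σ) hq0) (sub_nonneg.mpr hun)]
  have hfinal : σ ^ 2 * u * (μ S).toReal ≤ 2 * C * k := by
    have e1 : σ ^ 2 * u = M ^ 2 := hMsq.symm
    have s1 : σ ^ 2 * u * (μ S).toReal ≤ σ ^ 2 * u * (a + q) :=
      mul_le_mul_of_nonneg_left hPa (by positivity)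
    have s4 : M ^ 2 * a + B ^ 2 * a ≤ C ^ 2 * a := by
      have : C ^ 2 = M ^ 2 + 2 * M * B + B ^ 2 := by rw [hCdef]; ring
      nlinarith [mul_nonneg (mul_nonneg hM0.le hB.le) ha0]
    have s5 : C ^ 2 * a + C ^ 2 * a' = C ^ 2 := by
      rw [← mul_add, haa', mul_one]
    have s6 : C ^ 2 - (C - k) ^ 2 = 2 * C * k - k ^ 2 := by ring
    nlinarith [sq_nonneg k, hq2, hmain, e1]
  have hfin2 : (μ S).toReal * M ≤ 4 * k := by
    have hCk : 2 * C * k ≤ 4 * M * k := by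
      have : C ≤ 2 * M := by rw [hCdef]; linarith
      nlinarith
    have e1 : σ ^ 2 * u = M ^ 2 := hMsq.symm
    nlinarith [hfinal, hM0, hP0]
  rw [le_div_iff₀ hM0]
  exact hfin2
end

section
/- A birth-and-death chain on {0, 1, …, n} with transition kernel P admits a monotone coupling (a coupling of two copies started from ordered positions that preserves the coordinate order at every step) if and only if P(i, i+1) + P(i+1, i) ≤ 1 for every i < n. -/
open Finset

/-- A birth-and-death chain on {0,…,n} admits a monotone (order-preserving)
    one-step coupling from every ordered pair of states if and only if
    P(i, i+1) + P(i+1, i) ≤ 1 for every i < n. -/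
theorem stmt11 (n : ℕ) (P : ℕ → ℕ → ℝ)
    (hP0 : ∀ i j, 0 ≤ P i j)
    (hrow : ∀ i, i ≤ n → ∑ j ∈ range (n + 1), P i j = 1)
    (hbd : ∀ i j, i ≤ n → j ≤ n → 1 < ((i : ℤ) - (j : ℤ)).natAbs → P i j = 0) :
    (∀ x y, x ≤ y → y ≤ n →
        ∃ q : ℕ → ℕ → ℝ,
          (∀ a b, 0 ≤ q a b) ∧
          (∀ a, a ≤ n → ∑ b ∈ range (n + 1), q a b = P x a) ∧
          (∀ b, b ≤ n → ∑ a ∈ range (n + 1), q a b = P y b) ∧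
          (∀ a b, b < a → q a b = 0))
      ↔ (∀ i, i + 1 ≤ n → P i (i + 1) + P (i + 1) i ≤ 1) := by
  have key : ∀ i j : ℕ, i ≤ n → j ≤ n → (j + 2 ≤ i ∨ i + 2 ≤ j) → P i j = 0 := fun i j hi hj hij =>
    hbd i j hi hj (by omega)
  constructor
  · -- forward direction
    intro h i hi
    obtain ⟨q, hq0, hrq, hcq, hsupp⟩ := h i (i + 1) (Nat.le_succ i) hi
    have himem : i ∈ range (n + 1) := mem_range.mpr (by omega)
    have hmem : i + 1 ∈ range (n + 1) := mem_range.mpr (by omega)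
    have h1 : ∑ a ∈ range (n + 1), ∑ b ∈ range (n + 1), q a b = 1 := by
      rw [Finset.sum_congr rfl fun a ha => hrq a (by
        have := mem_range.mp ha; omega)]
      exact hrow i (by omega)
    have h2 : (∑ b ∈ range (n + 1), q (i + 1) b)
        + ∑ a ∈ (range (n + 1)).erase (i + 1), ∑ b ∈ range (n + 1), q a b
        = ∑ a ∈ range (n + 1), ∑ b ∈ range (n + 1), q a b :=
      Finset.add_sum_erase _ (fun a => ∑ b ∈ range (n + 1), q a b) hmem
    have h3 : q (i + 1) i + ∑ a ∈ (range (n + 1)).erase (i + 1), q a i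
        = ∑ a ∈ range (n + 1), q a i :=
      Finset.add_sum_erase _ (fun a => q a i) hmem
    have h0 : q (i + 1) i = 0 := hsupp (i + 1) i (Nat.lt_succ_self i)
    have hc : ∑ a ∈ range (n + 1), q a i = P (i + 1) i := hcq i (by omega)
    have hr1 : ∑ b ∈ range (n + 1), q (i + 1) b = P i (i + 1) := hrq (i + 1) hi
    have h4 : ∑ a ∈ (range (n + 1)).erase (i + 1), q a i
        ≤ ∑ a ∈ (range (n + 1)).erase (i + 1), ∑ b ∈ range (n + 1), q a b :=
      Finset.sum_le_sum fun a _ => Finset.single_le_sum (fun b _ => hq0 a b) himem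
    linarith
  · -- reverse direction
    intro h x y hxy hyn
    rcases eq_or_lt_of_le hxy with rfl | hlt
    · -- diagonal coupling, y = x
      refine ⟨fun a b => if b = a ∧ a ≤ n then P x a else 0, ?_, ?_, ?_, ?_⟩
      · intro a b
        dsimp only
        split
        · exact hP0 _ _
        · exact le_refl 0
      · intro a ha
        dsimp only
        have hmem : a ∈ range (n + 1) := mem_range.mpr (by omega)
        rw [Finset.sum_congr rfl (fun b _ => by
          simp only [ha, and_true] : ∀ b ∈ range (n+1),
            (if b = a ∧ a ≤ n then P x a else 0) = if b = a then P x a else 0)]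
        rw [Finset.sum_ite_eq' (range (n+1)) a (fun _ => P x a), if_pos hmem]
      · intro b hb
        dsimp only
        have hmem : b ∈ range (n + 1) := mem_range.mpr (by omega)
        rw [Finset.sum_congr rfl (fun a _ => by
          by_cases hab : a = b
          · subst hab; simp [hb]
          · rw [if_neg (fun hh => hab hh.1.symm), if_neg hab] : ∀ a ∈ range (n+1),
            (if b = a ∧ a ≤ n then P x a else 0) = if a = b then P x b else 0)]
        rw [Finset.sum_ite_eq' (range (n+1)) b (fun _ => P x b), if_pos hmem]
      · intro a b hba
        dsimp only
        have : ¬(b = a) := by omega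
        simp [this]
    rcases Nat.lt_or_ge (x + 1) y with h2 | h2
    · -- y ≥ x + 2 : ordered product coupling
      refine ⟨fun a b => if a ≤ b ∧ a ≤ n ∧ b ≤ n then P x a * P y b else 0, ?_, ?_, ?_, ?_⟩
      · intro a b
        dsimp only
        split
        · exact mul_nonneg (hP0 _ _) (hP0 _ _)
        · exact le_refl 0
      · intro a ha
        dsimp only
        by_cases hPa : P x a = 0
        · rw [Finset.sum_eq_zero, hPa]
          intro b _
          split
          · rw [hPa, zero_mul]
          · rfl
        · have hax : a ≤ x + 1 := by
            by_contra hcon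
            exact hPa (key x a (by omega) ha (by omega))
          rw [Finset.sum_congr rfl (fun b hb => by
            have hbn : b ≤ n := by have := mem_range.mp hb; omega
            by_cases hab : a ≤ b
            · simp [hab, ha, hbn]
            · have : P y b = 0 := key y b hyn hbn (by omega)
              simp [hab, this] : ∀ b ∈ range (n+1),
              (if a ≤ b ∧ a ≤ n ∧ b ≤ n then P x a * P y b else 0) = P x a * P y b)]
          rw [← Finset.mul_sum, hrow y hyn, mul_one]
      · intro b hb
        dsimp only
        by_cases hPb : P y b = 0
        · rw [Finset.sum_eq_zero, hPb]
          intro a _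
          split
          · rw [hPb, mul_zero]
          · rfl
        · have hby : y ≤ b + 1 := by
            by_contra hcon
            exact hPb (key y b hyn hb (by omega))
          rw [Finset.sum_congr rfl (fun a ha => by
            have han : a ≤ n := by have := mem_range.mp ha; omega
            by_cases hab : a ≤ b
            · simp [hab, hb, han]
            · have : P x a = 0 := key x a (by omega) han (by omega)
              simp [hab, this] : ∀ a ∈ range (n+1),
              (if a ≤ b ∧ a ≤ n ∧ b ≤ n then P x a * P y b else 0) = P x a * P y b)]
          rw [← Finset.sum_mul, hrow x (by omega), one_mul]
      · intro a b hba
        dsimp only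
        have : ¬(a ≤ b) := by omega
        simp [this]
    · -- y = x + 1 : the interesting case
      have hy : y = x + 1 := by omega
      subst hy
      have hx1 : x + 1 ≤ n := hyn
      have hxn : x ≤ n := by omega
      have hcond := h x hx1
      have hsr : ∑ b ∈ range (n + 1), P (x + 1) b = 1 := hrow (x + 1) hx1
      have hsp : ∑ a ∈ range (n + 1), P x a = 1 := hrow x hxn
      -- structure of the row x+1
      have hsr3 : P (x + 1) x + P (x + 1) (x + 1)
          + (if x + 2 ≤ n then P (x + 1) (x + 2) else 0) = 1 := by
        rw [← hsr, Finset.sum_congr rfl (fun b hb => by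
          have hbn : b ≤ n := by have := mem_range.mp hb; omega
          by_cases hb1 : b = x
          · subst hb1; simp
          by_cases hb2 : b = x + 1
          · subst hb2; simp
          by_cases hb3 : b = x + 2
          · subst hb3; simp
          · rw [key (x + 1) b hx1 hbn (by omega)]
            simp [hb1, hb2, hb3] : ∀ b ∈ range (n+1), P (x+1) b
            = (if b = x then P (x+1) x else 0) + (if b = x+1 then P (x+1) (x+1) else 0)
              + (if b = x+2 then P (x+1) (x+2) else 0))]
        rw [Finset.sum_add_distrib, Finset.sum_add_distrib,
          Finset.sum_ite_eq' (range (n+1)) x, Finset.sum_ite_eq' (range (n+1)) (x+1),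
          Finset.sum_ite_eq' (range (n+1)) (x+2)]
        simp [mem_range, Nat.lt_succ_iff, hxn, hx1]
      by_cases hp1 : P x (x + 1) = 1
      · -- degenerate case: all mass of row x sits on x+1
        have hrx0 : P (x + 1) x = 0 := le_antisymm (by linarith) (hP0 _ _)
        refine ⟨fun a b => if a = x + 1 ∧ b ≤ n then P (x + 1) b else 0, ?_, ?_, ?_, ?_⟩
        · intro a b
          dsimp only
          split
          · exact hP0 _ _
          · exact le_refl 0
        · intro a ha
          dsimp only
          by_cases hax : a = x + 1
          · subst hax
            rw [Finset.sum_congr rfl (fun b hb => by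
              have hbn : b ≤ n := by have := mem_range.mp hb; omega
              simp [hbn] : ∀ b ∈ range (n+1),
              (if x + 1 = x + 1 ∧ b ≤ n then P (x+1) b else 0) = P (x+1) b)]
            rw [hsr, hp1]
          · rw [Finset.sum_eq_zero (fun b _ => by simp [hax])]
            -- show P x a = 0 using that P x (x+1) = 1 exhausts the row sum
            have hpair : P x a + P x (x + 1) ≤ 1 := by
              have hsub : ({a, x + 1} : Finset ℕ) ⊆ range (n + 1) := by
                intro z hz
                simp only [mem_insert, mem_singleton] at hz
                rcases hz with rfl | rfl <;> exact mem_range.mpr (by omega)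
              calc P x a + P x (x + 1) = ∑ z ∈ ({a, x + 1} : Finset ℕ), P x z := by
                    rw [Finset.sum_pair hax]
                _ ≤ ∑ z ∈ range (n + 1), P x z :=
                    Finset.sum_le_sum_of_subset_of_nonneg hsub fun z _ _ => hP0 x z
                _ = 1 := hsp
            have := hP0 x a
            linarith [hpair]
        · intro b hb
          dsimp only
          rw [Finset.sum_congr rfl (fun a _ => by
            by_cases hax : a = x + 1
            · subst hax; simp [hb]
            · simp [hax] : ∀ a ∈ range (n+1),
            (if a = x + 1 ∧ b ≤ n then P (x+1) b else 0) = if a = x + 1 then P (x+1) b else 0)]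
          rw [Finset.sum_ite_eq' (range (n+1)) (x+1) (fun _ => P (x+1) b),
            if_pos (mem_range.mpr (by omega))]
        · intro a b hba
          dsimp only
          split
          · rename_i hcon
            obtain ⟨rfl, hbn⟩ := hcon
            rcases Nat.lt_or_ge b x with hbx | hbx
            · exact key (x + 1) b hx1 hbn (by omega)
            · have : b = x := by omega
              subst this; exact hrx0
          · rfl
      · -- main case: P x (x+1) < 1
        have hp1le : P x (x + 1) ≤ 1 := by have := hP0 (x + 1) x; linarith
        have hS : (0:ℝ) < 1 - P x (x + 1) := by
          rcases lt_or_eq_of_le hp1le with hlt' | heq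
          · linarith
          · exact absurd heq hp1
        set A := min (P x (x + 1)) (P (x + 1) (x + 1)) with hA_def
        have hA0 : 0 ≤ A := le_min (hP0 _ _) (hP0 _ _)
        have hAle : A ≤ P x (x + 1) := min_le_left _ _
        have hAle' : A ≤ P (x + 1) (x + 1) := min_le_right _ _
        set t : ℕ → ℝ := fun b => if b = x + 1 then A else if b = x + 2 then P x (x + 1) - A else 0
          with ht_def
        set c : ℕ → ℝ := fun b => P (x + 1) b - t b with hc_def
        have ht1 : t (x + 1) = A := by simp [ht_def]
        have ht2 : t (x + 2) = P x (x + 1) - A := by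
          simp [ht_def]
        have ht0 : ∀ b, b ≠ x + 1 → b ≠ x + 2 → t b = 0 := by
          intro b h1 h2
          simp [ht_def, h1, h2]
        have ht_nonneg : ∀ b, 0 ≤ t b := by
          intro b
          by_cases h1 : b = x + 1
          · subst h1; rw [ht1]; exact hA0
          by_cases h2 : b = x + 2
          · subst h2; rw [ht2]; linarith
          · rw [ht0 b h1 h2]
        have hcb : ∀ b, c b = P (x + 1) b - t b := fun b => by simp only [hc_def]
        have ht_pt : ∀ b, t b = (if b = x + 1 then A else 0)
            + (if b = x + 2 then P x (x + 1) - A else 0) := by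
          intro b
          by_cases hb1 : b = x + 1
          · subst hb1; rw [ht1, if_pos rfl, if_neg (by omega), add_zero]
          by_cases hb2 : b = x + 2
          · subst hb2; rw [ht2, if_neg (by omega), if_pos rfl, zero_add]
          · rw [ht0 b hb1 hb2, if_neg hb1, if_neg hb2, add_zero]
        have hSt : ∑ b ∈ range (n + 1), t b = P x (x + 1) := by
          rw [Finset.sum_congr rfl fun b _ => ht_pt b, Finset.sum_add_distrib,
            Finset.sum_ite_eq' (range (n+1)) (x+1), Finset.sum_ite_eq' (range (n+1)) (x+2)]
          by_cases hx2 : x + 2 ≤ n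
          · rw [if_pos (mem_range.mpr (by omega)), if_pos (mem_range.mpr (by omega))]
            ring
          · have hr2 : P (x + 1) x + P (x + 1) (x + 1) = 1 := by
              rw [if_neg hx2] at hsr3; linarith
            have hAeq : A = P x (x + 1) := min_eq_left (by linarith)
            rw [if_pos (mem_range.mpr (by omega)),
              if_neg (by simp only [mem_range]; omega), hAeq, add_zero]
        have hc0 : ∀ b, b ≤ n → 0 ≤ c b := by
          intro b hb
          rw [hcb b]
          by_cases hb1 : b = x + 1
          · subst hb1; rw [ht1]; linarith
          by_cases hb2 : b = x + 2
          · subst hb2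
            rw [if_pos hb] at hsr3
            rw [ht2]
            rcases le_total (P x (x + 1)) (P (x + 1) (x + 1)) with hle | hle
            · have hAeq : A = P x (x + 1) := min_eq_left hle
              rw [hAeq]; have := hP0 (x + 1) (x + 2); linarith
            · have hAeq : A = P (x + 1) (x + 1) := min_eq_right hle
              rw [hAeq]; linarith
          · rw [ht0 b hb1 hb2]; have := hP0 (x + 1) b; linarith
        have hSc : ∑ b ∈ range (n + 1), c b = 1 - P x (x + 1) := by
          rw [Finset.sum_congr rfl fun b _ => hcb b, Finset.sum_sub_distrib, hsr, hSt]
        have hSx : ∑ a ∈ range (n + 1), (if a ≤ x then P x a else 0) = 1 - P x (x + 1) := by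
          have hsplit : ∀ a ∈ range (n + 1), P x a
              = (if a ≤ x then P x a else 0) + (if a = x + 1 then P x a else 0) := by
            intro a ha
            have han : a ≤ n := by have := mem_range.mp ha; omega
            by_cases h1 : a ≤ x
            · rw [if_pos h1, if_neg (by omega), add_zero]
            by_cases h2 : a = x + 1
            · rw [if_neg h1, if_pos h2, zero_add]
            · rw [key x a hxn han (by omega), if_neg h1, if_neg h2, add_zero]
          have := hsp
          rw [Finset.sum_congr rfl hsplit, Finset.sum_add_distrib,
            Finset.sum_ite_eq' (range (n+1)) (x+1) (fun a => P x a),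
            if_pos (mem_range.mpr (by omega))] at this
          linarith
        refine ⟨fun a b => if a = x + 1 then t b
          else if a ≤ x ∧ b ≤ n then P x a * (c b / (1 - P x (x + 1))) else 0, ?_, ?_, ?_, ?_⟩
        · intro a b
          dsimp only
          by_cases ha1 : a = x + 1
          · rw [if_pos ha1]; exact ht_nonneg b
          · rw [if_neg ha1]
            split
            · rename_i hcon
              exact mul_nonneg (hP0 _ _) (div_nonneg (hc0 b hcon.2) (le_of_lt hS))
            · exact le_refl 0
        · intro a ha
          dsimp only
          by_cases ha1 : a = x + 1
          · subst ha1
            rw [Finset.sum_congr rfl (fun b _ => if_pos rfl)]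
            exact hSt
          by_cases hax : a ≤ x
          · rw [Finset.sum_congr rfl (fun b hb => by
              have hbn : b ≤ n := by have := mem_range.mp hb; omega
              rw [if_neg ha1, if_pos ⟨hax, hbn⟩] : ∀ b ∈ range (n+1),
              (if a = x + 1 then t b
                else if a ≤ x ∧ b ≤ n then P x a * (c b / (1 - P x (x + 1))) else 0)
              = P x a * (c b / (1 - P x (x + 1))))]
            rw [← Finset.mul_sum, ← Finset.sum_div, hSc, div_self (ne_of_gt hS), mul_one]
          · rw [Finset.sum_eq_zero (fun b _ => by
              rw [if_neg ha1, if_neg (fun hcon => hax hcon.1)])]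
            exact (key x a hxn ha (by omega)).symm
        · intro b hb
          dsimp only
          have hsplit : ∀ a ∈ range (n + 1),
              (if a = x + 1 then t b
                else if a ≤ x ∧ b ≤ n then P x a * (c b / (1 - P x (x + 1))) else 0)
              = (if a = x + 1 then t b else 0)
                + (if a ≤ x then P x a else 0) * (c b / (1 - P x (x + 1))) := by
            intro a _
            by_cases h1 : a = x + 1
            · rw [if_pos h1, if_pos h1, if_neg (by omega), zero_mul, add_zero]
            by_cases h2 : a ≤ x
            · rw [if_neg h1, if_pos ⟨h2, hb⟩, if_neg h1, if_pos h2, zero_add]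
            · rw [if_neg h1, if_neg (fun hcon => h2 hcon.1), if_neg h1, if_neg h2,
                zero_mul, add_zero]
          rw [Finset.sum_congr rfl hsplit, Finset.sum_add_distrib, ← Finset.sum_mul,
            Finset.sum_ite_eq' (range (n+1)) (x+1) (fun _ => t b),
            if_pos (mem_range.mpr (by omega)), hSx]
          rw [show (1 - P x (x + 1)) * (c b / (1 - P x (x + 1))) = c b from by
            field_simp]
          rw [hcb b]; ring
        · intro a b hba
          dsimp only
          by_cases ha1 : a = x + 1
          · subst ha1
            rw [if_pos rfl]
            exact ht0 b (by omega) (by omega)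
          · rw [if_neg ha1]
            split
            · rename_i hcon
              obtain ⟨hax, hbn⟩ := hcon
              have hrb : P (x + 1) b = 0 := key (x + 1) b hx1 hbn (by omega)
              have htb : t b = 0 := ht0 b (by omega) (by omega)
              rw [hcb b, hrb, htb, sub_zero, zero_div, mul_zero]
            · rfl
end

section
/- Let λ₂ be the second largest eigenvalue of a reversible, irreducible transition matrix P on a finite state space with stationary distribution π, and let Φ⋆ = min_{S: π(S) ≤ 1/2} Q(S, Sᶜ)/π(S) be the bottleneck ratio, where Q(x,y) = π(x)P(x,y). Then Φ⋆²/2 ≤ 1 − λ₂ ≤ 2Φ⋆. -/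
open Finset

open RealInnerProductSpace in
lemma rayleigh_bound {Ω : Type*} [Fintype Ω] [DecidableEq Ω]
    (P : Ω → Ω → ℝ) (π : Ω → ℝ) (lam2 : ℝ)
    (hP1 : ∀ x, ∑ y, P x y = 1)
    (hπ0 : ∀ x, 0 < π x)
    (hrev : ∀ x y, π x * P x y = π y * P y x)
    (heig : ∃ f : Ω → ℝ, f ≠ 0 ∧ (∑ x, π x * f x = 0) ∧
      ∀ x, ∑ y, P x y * f y = lam2 * f x)
    (hmax : ∀ (lam : ℝ) (f : Ω → ℝ), f ≠ 0 → (∑ x, π x * f x = 0) →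
      (∀ x, ∑ y, P x y * f y = lam * f x) → lam ≤ lam2)
    (f : Ω → ℝ) (hf : ∑ x, π x * f x = 0) :
    ∑ x, π x * f x * (∑ y, P x y * f y) ≤ lam2 * ∑ x, π x * f x ^ 2 := by
  classical
  set s : Ω → ℝ := fun x => Real.sqrt (π x) with hs
  have hs0 : ∀ x, 0 < s x := fun x => Real.sqrt_pos.mpr (hπ0 x)
  have hss : ∀ x, s x * s x = π x := fun x => Real.mul_self_sqrt (hπ0 x).le
  set A : Ω → Ω → ℝ := fun x y => s x * P x y / s y with hA
  have hAs : ∀ x y, A x y * s y = s x * P x y := fun x y =>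
    div_mul_cancel₀ _ (hs0 y).ne'
  have hAsymm : ∀ x y, A x y = A y x := by
    intro x y
    rw [hA]
    rw [div_eq_div_iff (hs0 y).ne' (hs0 x).ne']
    -- s x * P x y * s x = s y * P y x * s y
    calc s x * P x y * s x = π x * P x y := by rw [mul_comm (s x * P x y) (s x), ← mul_assoc, hss]
    _ = π y * P y x := hrev x y
    _ = s y * P y x * s y := by rw [mul_comm (s y * P y x) (s y), ← mul_assoc, hss]
  have innf : ∀ v w : EuclideanSpace ℝ Ω, ⟪v, w⟫ = ∑ x, v x * w x := by
    intro v w; simp [PiLp.inner_apply, RCLike.inner_apply, conj_trivial]; exact Finset.sum_congr rfl fun x _ => mul_comm _ _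
  let T : EuclideanSpace ℝ Ω →ₗ[ℝ] EuclideanSpace ℝ Ω :=
    { toFun := fun w => WithLp.toLp 2 (fun x => ∑ y, A x y * w y)
      map_add' := by
        intro v w; ext x
        show ∑ y, A x y * (v y + w y) = (∑ y, A x y * v y) + ∑ y, A x y * w y
        rw [← Finset.sum_add_distrib]; exact Finset.sum_congr rfl fun y _ => mul_add _ _ _
      map_smul' := by
        intro c w; ext x
        show ∑ y, A x y * (c * w y) = c * ∑ y, A x y * w y
        rw [Finset.mul_sum]; exact Finset.sum_congr rfl fun y _ => by ring }
  have hT_apply : ∀ (w : EuclideanSpace ℝ Ω) (x : Ω), T w x = ∑ y, A x y * w y :=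
    fun _ _ => rfl
  have hTsym : T.IsSymmetric := by
    intro v w
    rw [innf, innf]
    simp only [hT_apply]
    calc ∑ x, (∑ y, A x y * v y) * w x = ∑ x, ∑ y, A x y * v y * w x := by
          exact Finset.sum_congr rfl fun x _ => Finset.sum_mul _ _ _
      _ = ∑ y, ∑ x, A x y * v y * w x := Finset.sum_comm
      _ = ∑ y, v y * ∑ x, A y x * w x := by
          refine Finset.sum_congr rfl fun y _ => ?_
          rw [Finset.mul_sum]
          exact Finset.sum_congr rfl fun x _ => by rw [hAsymm x y]; ring
  set u : EuclideanSpace ℝ Ω := WithLp.toLp 2 (fun x => s x : Ω → ℝ) with hu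
  have hTu : T u = u := by
    ext x
    show ∑ y, A x y * s y = s x
    calc ∑ y, A x y * s y = ∑ y, s x * P x y := Finset.sum_congr rfl fun y _ => hAs x y
      _ = s x * ∑ y, P x y := (Finset.mul_sum _ _ _).symm
      _ = s x := by rw [hP1 x, mul_one]
  set V : Submodule ℝ (EuclideanSpace ℝ Ω) := (ℝ ∙ u)ᗮ with hV
  have hmemV : ∀ w : EuclideanSpace ℝ Ω, (∑ x, s x * w x = 0) → w ∈ V := by
    intro w hw
    rw [hV, Submodule.mem_orthogonal]
    intro v hv
    obtain ⟨c, rfl⟩ := Submodule.mem_span_singleton.mp hv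
    rw [inner_smul_left, innf]
    simp only [conj_trivial]
    rw [show ∑ x, u x * w x = ∑ x, s x * w x from rfl, hw, mul_zero]
  have huw : ∀ w ∈ V, ⟪u, w⟫ = 0 := by
    intro w hw
    exact (Submodule.mem_orthogonal (ℝ ∙ u) w).mp hw u (Submodule.mem_span_singleton_self u)
  have hVinv : ∀ w ∈ V, T w ∈ V := by
    intro w hw
    rw [hV, Submodule.mem_orthogonal]
    intro v hv
    obtain ⟨c, rfl⟩ := Submodule.mem_span_singleton.mp hv
    rw [inner_smul_left]
    simp only [conj_trivial]
    rw [← hTsym u w, hTu, huw w hw, mul_zero]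
  set T' : V →ₗ[ℝ] V := T.restrict hVinv with hT'
  have hT'app : ∀ v : V, ((T' v : V) : EuclideanSpace ℝ Ω) = T (v : EuclideanSpace ℝ Ω) :=
    fun v => rfl
  have hT'sym : T'.IsSymmetric := by
    intro v w
    have : ⟪T (v : EuclideanSpace ℝ Ω), (w : EuclideanSpace ℝ Ω)⟫
        = ⟪(v : EuclideanSpace ℝ Ω), T (w : EuclideanSpace ℝ Ω)⟫ := hTsym _ _
    rw [Submodule.coe_inner, Submodule.coe_inner, hT'app, hT'app]
    exact this
  -- nontriviality of V
  obtain ⟨f₂, hf₂0, hf₂sum, hf₂eig⟩ := heig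
  set w₂ : EuclideanSpace ℝ Ω := WithLp.toLp 2 (fun x => s x * f₂ x : Ω → ℝ) with hw₂
  have hw₂V : w₂ ∈ V := by
    apply hmemV
    rw [← hf₂sum]
    exact Finset.sum_congr rfl fun x _ => by
      show s x * (s x * f₂ x) = π x * f₂ x
      rw [← mul_assoc, hss]
  have hw₂0 : w₂ ≠ 0 := by
    intro h
    apply hf₂0
    funext x
    have : s x * f₂ x = 0 := congrArg (fun v : EuclideanSpace ℝ Ω => v x) h
    rcases mul_eq_zero.mp this with h' | h'
    · exact absurd h' (hs0 x).ne'
    · exact h'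
  haveI : Nontrivial V := ⟨⟨⟨w₂, hw₂V⟩, 0, by simp [Subtype.ext_iff, hw₂0]⟩⟩
  set μ : ℝ := ⨆ x : { x : V // x ≠ 0 }, RCLike.re (⟪T' (x : V), (x : V)⟫) / ‖(x : V)‖ ^ 2 with hμ
  have heigμ : Module.End.HasEigenvalue T' μ := by
    have := hT'sym.hasEigenvalue_iSup_of_finiteDimensional
    exact this
  -- μ ≤ lam2
  have hμle : μ ≤ lam2 := by
    obtain ⟨v, hv⟩ := heigμ.exists_hasEigenvector
    have hveq : T' v = μ • v := Module.End.mem_eigenspace_iff.mp hv.1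
    have hvne : v ≠ 0 := hv.2
    have hvE : T (v : EuclideanSpace ℝ Ω) = μ • (v : EuclideanSpace ℝ Ω) := by
      rw [← hT'app, hveq]; rfl
    set g : Ω → ℝ := fun x => (v : EuclideanSpace ℝ Ω) x / s x with hg
    have hvg : ∀ x, (v : EuclideanSpace ℝ Ω) x = s x * g x := by
      intro x
      show (v : EuclideanSpace ℝ Ω) x = s x * ((v : EuclideanSpace ℝ Ω) x / s x)
      rw [mul_div_assoc']
      rw [mul_div_cancel_left₀ _ (hs0 x).ne']
    have hgne : g ≠ 0 := by
      intro h
      apply hvne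
      rw [Subtype.ext_iff]
      show (v : EuclideanSpace ℝ Ω) = 0
      ext x
      have hx : g x = 0 := congrFun h x
      show (v : EuclideanSpace ℝ Ω) x = 0
      rw [hvg x, hx, mul_zero]
    have hgsum : ∑ x, π x * g x = 0 := by
      have h0 : ⟪u, (v : EuclideanSpace ℝ Ω)⟫ = 0 := huw _ v.2
      rw [innf] at h0
      rw [← h0]
      refine Finset.sum_congr rfl fun x _ => ?_
      show π x * g x = s x * (v : EuclideanSpace ℝ Ω) x
      rw [hvg x, ← mul_assoc, hss]
    have hgeig : ∀ x, ∑ y, P x y * g y = μ * g x := by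
      intro x
      have h1 : T (v : EuclideanSpace ℝ Ω) x = μ * (v : EuclideanSpace ℝ Ω) x := by
        rw [hvE]; rfl
      rw [hT_apply] at h1
      have h2 : ∑ y, A x y * (v : EuclideanSpace ℝ Ω) y = s x * ∑ y, P x y * g y := by
        rw [Finset.mul_sum]
        refine Finset.sum_congr rfl fun y _ => ?_
        rw [hvg y, ← mul_assoc, hAs x y]; ring
      rw [h2, hvg x] at h1
      have h3 : s x * (∑ y, P x y * g y) = s x * (μ * g x) := by rw [h1]; ring
      exact mul_left_cancel₀ (hs0 x).ne' h3
    exact hmax μ g hgne hgsum hgeig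
  -- bounded above
  have hbdd : BddAbove (Set.range fun x : { x : V // x ≠ 0 } =>
      RCLike.re (⟪T' (x : V), (x : V)⟫) / ‖(x : V)‖ ^ 2) := by
    set Tc := LinearMap.toContinuousLinearMap T' with hTc
    refine ⟨‖Tc‖, ?_⟩
    rintro r ⟨x, rfl⟩
    have hx0 : (0 : ℝ) < ‖(x : V)‖ := norm_pos_iff.mpr x.2
    have h1 : RCLike.re (⟪T' (x : V), (x : V)⟫) ≤ ‖Tc‖ * ‖(x : V)‖ ^ 2 := by
      have := real_inner_le_norm (T' (x : V)) (x : V)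
      have h2 : ‖T' (x : V)‖ ≤ ‖Tc‖ * ‖(x : V)‖ := by
        have := Tc.le_opNorm (x : V)
        simpa [hTc] using this
      calc RCLike.re (⟪T' (x : V), (x : V)⟫) = ⟪T' (x : V), (x : V)⟫ := rfl
        _ ≤ ‖T' (x : V)‖ * ‖(x : V)‖ := real_inner_le_norm _ _
        _ ≤ (‖Tc‖ * ‖(x : V)‖) * ‖(x : V)‖ := by
            apply mul_le_mul_of_nonneg_right h2 (norm_nonneg _)
        _ = ‖Tc‖ * ‖(x : V)‖ ^ 2 := by ring
    rw [div_le_iff₀ (by positivity)]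
    exact h1
  -- conclude
  set w : EuclideanSpace ℝ Ω := WithLp.toLp 2 (fun x => s x * f x : Ω → ℝ) with hwdef
  have hwV : w ∈ V := by
    apply hmemV
    rw [← hf]
    exact Finset.sum_congr rfl fun x _ => by
      show s x * (s x * f x) = π x * f x
      rw [← mul_assoc, hss]
  by_cases hwz : w = 0
  · have hf0 : ∀ x, f x = 0 := by
      intro x
      have hx : s x * f x = 0 := congrArg (fun v : EuclideanSpace ℝ Ω => v x) hwz
      rcases mul_eq_zero.mp hx with h' | h'
      · exact absurd h' (hs0 x).ne'
      · exact h'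
    simp [hf0]
  · have hwne : (⟨w, hwV⟩ : V) ≠ 0 := by simp [Subtype.ext_iff, hwz]
    set x₀ : { x : V // x ≠ 0 } := ⟨⟨w, hwV⟩, hwne⟩ with hx₀
    have hquot : RCLike.re (⟪T' (x₀ : V), (x₀ : V)⟫) / ‖(x₀ : V)‖ ^ 2 ≤ μ :=
      le_ciSup hbdd x₀
    have hnorm : ‖(x₀ : V)‖ = ‖w‖ := rfl
    have hn : (0:ℝ) < ‖w‖ := norm_pos_iff.mpr hwz
    have hinner : ⟪T' (x₀ : V), (x₀ : V)⟫ = ⟪T w, w⟫ := by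
      rw [Submodule.coe_inner, hT'app]
    have hquot2 : ⟪T w, w⟫ / ‖w‖ ^ 2 ≤ μ := by
      have h := le_ciSup hbdd x₀
      rw [hinner] at h
      exact h
    have hkey : ⟪T w, w⟫ ≤ μ * ‖w‖ ^ 2 :=
      (div_le_iff₀ (by positivity : (0:ℝ) < ‖w‖ ^ 2)).mp hquot2
    have hTww : ⟪T w, w⟫ = ∑ x, π x * f x * (∑ y, P x y * f y) := by
      rw [innf]
      refine Finset.sum_congr rfl fun x _ => ?_
      have h1 : T w x = s x * ∑ y, P x y * f y := by
        rw [hT_apply, Finset.mul_sum]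
        refine Finset.sum_congr rfl fun y _ => ?_
        show A x y * (s y * f y) = s x * (P x y * f y)
        rw [← mul_assoc, hAs x y]; ring
      rw [h1]
      show s x * (∑ y, P x y * f y) * (s x * f x) = π x * f x * ∑ y, P x y * f y
      rw [← hss x]; ring
    have hnw : ‖w‖ ^ 2 = ∑ x, π x * f x ^ 2 := by
      rw [← real_inner_self_eq_norm_sq, innf]
      refine Finset.sum_congr rfl fun x _ => ?_
      show (s x * f x) * (s x * f x) = π x * f x ^ 2
      rw [← hss x]; ring
    rw [← hTww, ← hnw]
    calc ⟪T w, w⟫ ≤ μ * ‖w‖ ^ 2 := hkey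
      _ ≤ lam2 * ‖w‖ ^ 2 := mul_le_mul_of_nonneg_right hμle (by positivity)


lemma coarea_bound {Ω : Type*} [Fintype Ω] [DecidableEq Ω]
    (P : Ω → Ω → ℝ) (π : Ω → ℝ) (Φstar : ℝ)
    (hP0 : ∀ x y, 0 ≤ P x y) (hπ0 : ∀ x, 0 < π x)
    (hΦub : ∀ S : Finset Ω, 0 < (∑ x ∈ S, π x) → (∑ x ∈ S, π x) ≤ 1 / 2 →
      Φstar ≤ (∑ x ∈ S, ∑ y ∈ Sᶜ, π x * P x y) / ∑ x ∈ S, π x)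
    (h : Ω → ℝ) (hh0 : ∀ x, 0 ≤ h x)
    (hhalf : (∑ x ∈ univ.filter (fun x => 0 < h x), π x) ≤ 1 / 2) :
    Φstar * ∑ x, π x * h x ≤ ∑ x, ∑ y, (π x * P x y) * max (h x - h y) 0 := by
  classical
  suffices H : ∀ n (h : Ω → ℝ), (∀ x, 0 ≤ h x) →
      ((∑ x ∈ univ.filter (fun x => 0 < h x), π x) ≤ 1 / 2) →
      (univ.filter (fun x => 0 < h x)).card = n →
      Φstar * ∑ x, π x * h x ≤ ∑ x, ∑ y, (π x * P x y) * max (h x - h y) 0 by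
    exact H _ h hh0 hhalf rfl
  intro n
  induction n using Nat.strong_induction_on with
  | _ n IH =>
    intro h hh0 hhalf hcard
    set S : Finset Ω := univ.filter (fun x => 0 < h x) with hSdef
    have hzero : ∀ x, x ∉ S → h x = 0 := by
      intro x hx
      have : ¬ 0 < h x := by simpa [hSdef] using hx
      linarith [hh0 x]
    by_cases hSne : S.Nonempty
    swap
    · -- S empty : h = 0
      have h0 : ∀ x, h x = 0 := fun x => hzero x (fun hx => hSne ⟨x, hx⟩)
      have l : ∑ x, π x * h x = 0 := by
        refine Finset.sum_eq_zero fun x _ => by rw [h0 x, mul_zero]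
      rw [l, mul_zero]
      refine Finset.sum_nonneg fun x _ => Finset.sum_nonneg fun y _ => ?_
      exact mul_nonneg (mul_nonneg (hπ0 x).le (hP0 x y)) (le_max_right _ _)
    · obtain ⟨x₀, hx₀S, hx₀min⟩ := S.exists_min_image h hSne
      set m : ℝ := h x₀ with hm
      have hmpos : 0 < m := by simpa [hSdef] using hx₀S
      set h' : Ω → ℝ := fun x => if x ∈ S then h x - m else 0 with hh'
      have hh'0 : ∀ x, 0 ≤ h' x := by
        intro x
        by_cases hx : x ∈ S
        · simp only [hh', if_pos hx]; linarith [hx₀min x hx]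
        · simp [hh', if_neg hx]
      set S' : Finset Ω := univ.filter (fun x => 0 < h' x) with hS'def
      have hsub : S' ⊆ S := by
        intro x hx
        by_contra hxS
        have : h' x = 0 := by simp [hh', if_neg hxS]
        have : 0 < h' x := by simpa [hS'def] using hx
        simp_all
      have hx₀S' : x₀ ∉ S' := by
        have : h' x₀ = 0 := by simp [hh', if_pos hx₀S, hm]
        simp [hS'def, this]
      have hcard' : S'.card < n := by
        rw [← hcard]
        exact Finset.card_lt_card ⟨hsub, fun hc => hx₀S' (hc hx₀S)⟩
      have hhalf' : (∑ x ∈ S', π x) ≤ 1 / 2 := by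
        refine le_trans (Finset.sum_le_sum_of_subset_of_nonneg hsub
          (fun x _ _ => (hπ0 x).le)) hhalf
      have hIH := IH S'.card hcard' h' hh'0 hhalf' rfl
      -- bottleneck bound for S
      have hπS : 0 < ∑ x ∈ S, π x := Finset.sum_pos (fun x _ => hπ0 x) hSne
      have hQS : Φstar * ∑ x ∈ S, π x ≤ ∑ x ∈ S, ∑ y ∈ Sᶜ, π x * P x y := by
        have := hΦub S hπS hhalf
        calc Φstar * ∑ x ∈ S, π x
            ≤ ((∑ x ∈ S, ∑ y ∈ Sᶜ, π x * P x y) / ∑ x ∈ S, π x) * ∑ x ∈ S, π x :=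
              mul_le_mul_of_nonneg_right this hπS.le
          _ = ∑ x ∈ S, ∑ y ∈ Sᶜ, π x * P x y := div_mul_cancel₀ _ hπS.ne'
      -- pointwise max identity
      have hptwise : ∀ x y, max (h x - h y) 0
          = max (h' x - h' y) 0 + (if x ∈ S then (if y ∈ Sᶜ then m else 0) else 0) := by
        intro x y
        by_cases hx : x ∈ S <;> by_cases hy : y ∈ S
        · have e : h' x - h' y = h x - h y := by
            simp only [hh', if_pos hx, if_pos hy]; ring
          rw [e, if_pos hx, if_neg (by simpa [Finset.mem_compl] using hy), add_zero]
        · have hy0 : h y = 0 := hzero y hy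
          have hx0 : 0 ≤ h x - m := by linarith [hx₀min x hx]
          have e1 : max (h x - h y) 0 = h x := by
            rw [hy0, sub_zero, max_eq_left]; linarith
          have e2 : h' x - h' y = h x - m := by
            simp only [hh', if_pos hx, if_neg hy]; ring
          rw [e1, e2, max_eq_left hx0, if_pos hx, if_pos (Finset.mem_compl.mpr hy)]
          ring
        · have hx0 : h x = 0 := hzero x hx
          have hym : 0 ≤ h y - m := by linarith [hx₀min y hy]
          have e1 : max (h x - h y) 0 = 0 := by
            rw [max_eq_right]; rw [hx0]; linarith [hh0 y, hmpos]
          have e2 : h' x - h' y = -(h y - m) := by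
            simp only [hh', if_neg hx, if_pos hy]; ring
          rw [e1, e2, max_eq_right (by linarith), if_neg hx, add_zero]
        · have hx0 : h x = 0 := hzero x hx
          have hy0 : h y = 0 := hzero y hy
          have e2 : h' x - h' y = 0 := by
            simp only [hh', if_neg hx, if_neg hy]; ring
          rw [hx0, hy0, e2, if_neg hx, add_zero, sub_zero]
      -- double-sum of indicator
      have hindsum : (∑ x, ∑ y, (if x ∈ S then (if y ∈ Sᶜ then m * (π x * P x y) else 0) else 0))
          = m * ∑ x ∈ S, ∑ y ∈ Sᶜ, π x * P x y := by
        have inner : ∀ x : Ω, (∑ y, (if y ∈ Sᶜ then m * (π x * P x y) else 0))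
            = ∑ y ∈ Sᶜ, m * (π x * P x y) := by
          intro x; rw [Finset.sum_ite_mem, Finset.univ_inter]
        calc (∑ x, ∑ y, (if x ∈ S then (if y ∈ Sᶜ then m * (π x * P x y) else 0) else 0))
            = ∑ x, (if x ∈ S then (∑ y, (if y ∈ Sᶜ then m * (π x * P x y) else 0)) else 0) := by
              refine Finset.sum_congr rfl fun x _ => ?_
              by_cases hx : x ∈ S <;> simp [hx]
          _ = ∑ x ∈ S, ∑ y, (if y ∈ Sᶜ then m * (π x * P x y) else 0) := by
              rw [Finset.sum_ite_mem, Finset.univ_inter]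
          _ = ∑ x ∈ S, ∑ y ∈ Sᶜ, m * (π x * P x y) :=
              Finset.sum_congr rfl fun x _ => inner x
          _ = m * ∑ x ∈ S, ∑ y ∈ Sᶜ, π x * P x y := by
              rw [Finset.mul_sum]
              exact Finset.sum_congr rfl fun x _ => (Finset.mul_sum _ _ _).symm
      -- sum decomposition of RHS
      have hRHS : ∑ x, ∑ y, (π x * P x y) * max (h x - h y) 0
          = (∑ x, ∑ y, (π x * P x y) * max (h' x - h' y) 0)
            + m * ∑ x ∈ S, ∑ y ∈ Sᶜ, π x * P x y := by
        have e1 : ∀ x y, (π x * P x y) * max (h x - h y) 0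
            = (π x * P x y) * max (h' x - h' y) 0
              + (if x ∈ S then (if y ∈ Sᶜ then m * (π x * P x y) else 0) else 0) := by
          intro x y
          rw [hptwise x y, mul_add]
          congr 1
          by_cases hx : x ∈ S <;> by_cases hy : y ∈ Sᶜ <;> simp [hx, hy] <;> ring
        calc ∑ x, ∑ y, (π x * P x y) * max (h x - h y) 0
            = ∑ x, ∑ y, ((π x * P x y) * max (h' x - h' y) 0
              + (if x ∈ S then (if y ∈ Sᶜ then m * (π x * P x y) else 0) else 0)) :=
              Finset.sum_congr rfl fun x _ => Finset.sum_congr rfl fun y _ => e1 x y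
          _ = (∑ x, ∑ y, (π x * P x y) * max (h' x - h' y) 0)
              + ∑ x, ∑ y, (if x ∈ S then (if y ∈ Sᶜ then m * (π x * P x y) else 0) else 0) := by
              rw [← Finset.sum_add_distrib]
              exact Finset.sum_congr rfl fun x _ => by rw [← Finset.sum_add_distrib]
          _ = (∑ x, ∑ y, (π x * P x y) * max (h' x - h' y) 0)
              + m * ∑ x ∈ S, ∑ y ∈ Sᶜ, π x * P x y := by rw [hindsum]
      -- sum decomposition of LHS
      have hLHS : ∑ x, π x * h x = (∑ x, π x * h' x) + m * ∑ x ∈ S, π x := by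
        have e1 : ∀ x, π x * h x = π x * h' x + (if x ∈ S then m * π x else 0) := by
          intro x
          by_cases hx : x ∈ S
          · simp only [hh', if_pos hx]; ring
          · simp [hh', if_neg hx, hzero x hx]
        calc ∑ x, π x * h x = ∑ x, (π x * h' x + (if x ∈ S then m * π x else 0)) :=
              Finset.sum_congr rfl fun x _ => e1 x
          _ = (∑ x, π x * h' x) + ∑ x, (if x ∈ S then m * π x else 0) :=
              Finset.sum_add_distrib
          _ = (∑ x, π x * h' x) + m * ∑ x ∈ S, π x := by
              congr 1
              rw [Finset.sum_ite_mem, Finset.univ_inter, Finset.mul_sum]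
      rw [hLHS, hRHS, mul_add]
      have : Φstar * (m * ∑ x ∈ S, π x) ≤ m * ∑ x ∈ S, ∑ y ∈ Sᶜ, π x * P x y := by
        calc Φstar * (m * ∑ x ∈ S, π x) = m * (Φstar * ∑ x ∈ S, π x) := by ring
          _ ≤ m * ∑ x ∈ S, ∑ y ∈ Sᶜ, π x * P x y :=
            mul_le_mul_of_nonneg_left hQS hmpos.le
      linarith [hIH]

lemma hard_aux {Ω : Type*} [Fintype Ω] [DecidableEq Ω]
    (P : Ω → Ω → ℝ) (π : Ω → ℝ) (lam2 Φstar : ℝ)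
    (hP0 : ∀ x y, 0 ≤ P x y) (hP1 : ∀ x, ∑ y, P x y = 1)
    (hπ0 : ∀ x, 0 < π x)
    (hrev : ∀ x y, π x * P x y = π y * P y x)
    (hΦub : ∀ S : Finset Ω, 0 < (∑ x ∈ S, π x) → (∑ x ∈ S, π x) ≤ 1 / 2 →
      Φstar ≤ (∑ x ∈ S, ∑ y ∈ Sᶜ, π x * P x y) / ∑ x ∈ S, π x)
    (hΦ0 : 0 ≤ Φstar)
    (f : Ω → ℝ) (hfeig : ∀ x, ∑ y, P x y * f y = lam2 * f x)
    (hBne : ∃ x, 0 < f x)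
    (hBhalf : (∑ x ∈ univ.filter (fun x => 0 < f x), π x) ≤ 1 / 2) :
    Φstar ^ 2 ≤ 2 * (1 - lam2) := by
  classical
  set g : Ω → ℝ := fun x => max (f x) 0 with hg
  have hg0 : ∀ x, 0 ≤ g x := fun x => le_max_right _ _
  have hgf : ∀ x, f x ≤ g x := fun x => le_max_left _ _
  set N : ℝ := ∑ x, π x * g x ^ 2 with hN
  have hNpos : 0 < N := by
    obtain ⟨z, hz⟩ := hBne
    refine Finset.sum_pos' (fun x _ => mul_nonneg (hπ0 x).le (sq_nonneg _))
      ⟨z, Finset.mem_univ z, ?_⟩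
    have hgz : g z = f z := max_eq_left hz.le
    rw [hgz]
    exact mul_pos (hπ0 z) (pow_pos hz 2)
  set D : ℝ := ∑ x, π x * g x * (g x - ∑ y, P x y * g y) with hD
  have hDle : D ≤ (1 - lam2) * N := by
    rw [hD, hN, Finset.mul_sum]
    refine Finset.sum_le_sum fun x _ => ?_
    by_cases hx : 0 < f x
    · have hgx : g x = f x := max_eq_left hx.le
      have hPg : lam2 * f x ≤ ∑ y, P x y * g y := by
        rw [← hfeig x]
        exact Finset.sum_le_sum fun y _ => mul_le_mul_of_nonneg_left (hgf y) (hP0 x y)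
      have h1 : g x - ∑ y, P x y * g y ≤ (1 - lam2) * g x := by
        rw [hgx]; linarith
      calc π x * g x * (g x - ∑ y, P x y * g y) ≤ π x * g x * ((1 - lam2) * g x) :=
            mul_le_mul_of_nonneg_left h1 (mul_nonneg (hπ0 x).le (hg0 x))
        _ = (1 - lam2) * (π x * g x ^ 2) := by ring
    · have hgx : g x = 0 := max_eq_right (le_of_not_gt hx)
      rw [hgx]
      simp
  -- column sums
  have hrow : ∀ x, ∑ y, π x * P x y = π x := by
    intro x; rw [← Finset.mul_sum, hP1, mul_one]
  have hcol : ∀ y, ∑ x, π x * P x y = π y := by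
    intro y
    calc ∑ x, π x * P x y = ∑ x, π y * P y x := Finset.sum_congr rfl fun x _ => hrev x y
      _ = π y := by rw [← Finset.mul_sum, hP1, mul_one]
  set C : ℝ := ∑ x, π x * g x * (∑ y, P x y * g y) with hC
  have hDNC : D = N - C := by
    rw [hD, hN, hC, ← Finset.sum_sub_distrib]
    exact Finset.sum_congr rfl fun x _ => by ring
  have hE2 : ∑ x, ∑ y, (π x * P x y) * (g x - g y) ^ 2 = 2 * D := by
    have hT1 : ∑ x, ∑ y, (π x * P x y) * g x ^ 2 = N := by
      rw [hN]
      refine Finset.sum_congr rfl fun x _ => ?_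
      rw [← Finset.sum_mul, hrow x]
    have hT3 : ∑ x, ∑ y, (π x * P x y) * g y ^ 2 = N := by
      rw [Finset.sum_comm, hN]
      refine Finset.sum_congr rfl fun y _ => ?_
      rw [← Finset.sum_mul, hcol y]
    have hT2 : ∑ x, ∑ y, (π x * P x y) * (g x * g y) = C := by
      rw [hC]
      refine Finset.sum_congr rfl fun x _ => ?_
      rw [Finset.mul_sum]
      exact Finset.sum_congr rfl fun y _ => by ring
    have expand : ∀ x y, (π x * P x y) * (g x - g y) ^ 2
        = (π x * P x y) * g x ^ 2 - 2 * ((π x * P x y) * (g x * g y))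
          + (π x * P x y) * g y ^ 2 := fun x y => by ring
    calc ∑ x, ∑ y, (π x * P x y) * (g x - g y) ^ 2
        = ∑ x, ∑ y, ((π x * P x y) * g x ^ 2 - 2 * ((π x * P x y) * (g x * g y))
          + (π x * P x y) * g y ^ 2) :=
          Finset.sum_congr rfl fun x _ => Finset.sum_congr rfl fun y _ => expand x y
      _ = (∑ x, ∑ y, (π x * P x y) * g x ^ 2)
          - 2 * (∑ x, ∑ y, (π x * P x y) * (g x * g y))
          + ∑ x, ∑ y, (π x * P x y) * g y ^ 2 := by
          rw [Finset.mul_sum]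
          rw [← Finset.sum_sub_distrib, ← Finset.sum_add_distrib]
          refine Finset.sum_congr rfl fun x _ => ?_
          rw [Finset.mul_sum]
          rw [← Finset.sum_sub_distrib, ← Finset.sum_add_distrib]
      _ = 2 * D := by rw [hT1, hT2, hT3, hDNC]; ring
  have hE2nonneg : 0 ≤ 2 * D := by
    rw [← hE2]
    refine Finset.sum_nonneg fun x _ => Finset.sum_nonneg fun y _ => ?_
    have := mul_nonneg (hπ0 x).le (hP0 x y)
    positivity
  have hE3 : ∑ x, ∑ y, (π x * P x y) * (g x + g y) ^ 2 ≤ 4 * N := by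
    have hT1 : ∑ x, ∑ y, (π x * P x y) * g x ^ 2 = N := by
      rw [hN]
      refine Finset.sum_congr rfl fun x _ => ?_
      rw [← Finset.sum_mul, hrow x]
    have hT3 : ∑ x, ∑ y, (π x * P x y) * g y ^ 2 = N := by
      rw [Finset.sum_comm, hN]
      refine Finset.sum_congr rfl fun y _ => ?_
      rw [← Finset.sum_mul, hcol y]
    calc ∑ x, ∑ y, (π x * P x y) * (g x + g y) ^ 2
        ≤ ∑ x, ∑ y, ((2 * ((π x * P x y) * g x ^ 2)) + 2 * ((π x * P x y) * g y ^ 2)) := by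
          refine Finset.sum_le_sum fun x _ => Finset.sum_le_sum fun y _ => ?_
          have hq : 0 ≤ π x * P x y := mul_nonneg (hπ0 x).le (hP0 x y)
          nlinarith [sq_nonneg (g x - g y), mul_nonneg hq (sq_nonneg (g x - g y))]
      _ = 2 * (∑ x, ∑ y, (π x * P x y) * g x ^ 2) + 2 * (∑ x, ∑ y, (π x * P x y) * g y ^ 2) := by
          rw [Finset.mul_sum, Finset.mul_sum, ← Finset.sum_add_distrib]
          refine Finset.sum_congr rfl fun x _ => ?_
          rw [Finset.mul_sum, Finset.mul_sum, ← Finset.sum_add_distrib]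
      _ = 4 * N := by rw [hT1, hT3]; ring
  -- Cauchy–Schwarz
  set K : ℝ := ∑ x, ∑ y, (π x * P x y) * |g x ^ 2 - g y ^ 2| with hK
  have hCS : K ^ 2 ≤ (2 * D) * (4 * N) := by
    have key : K ^ 2 ≤ (∑ x, ∑ y, (π x * P x y) * (g x - g y) ^ 2)
        * (∑ x, ∑ y, (π x * P x y) * (g x + g y) ^ 2) := by
      have h1 : K = ∑ p ∈ (univ ×ˢ univ : Finset (Ω × Ω)),
          (Real.sqrt (π p.1 * P p.1 p.2) * |g p.1 - g p.2|)
          * (Real.sqrt (π p.1 * P p.1 p.2) * (g p.1 + g p.2)) := by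
        rw [hK, Finset.sum_product]
        refine Finset.sum_congr rfl fun x _ => Finset.sum_congr rfl fun y _ => ?_
        have hq : 0 ≤ π x * P x y := mul_nonneg (hπ0 x).le (hP0 x y)
        have e1 : (Real.sqrt (π x * P x y) * |g x - g y|)
            * (Real.sqrt (π x * P x y) * (g x + g y))
            = (π x * P x y) * (|g x - g y| * (g x + g y)) := by
          rw [show (Real.sqrt (π x * P x y) * |g x - g y|)
              * (Real.sqrt (π x * P x y) * (g x + g y))
              = (Real.sqrt (π x * P x y) * Real.sqrt (π x * P x y))
                * (|g x - g y| * (g x + g y)) from by ring,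
            Real.mul_self_sqrt hq]
        rw [e1]
        congr 1
        rw [show g x + g y = |g x + g y| from (abs_of_nonneg (by positivity)).symm,
          ← abs_mul]
        congr 1
        ring
      have h2 : ∑ x, ∑ y, (π x * P x y) * (g x - g y) ^ 2
          = ∑ p ∈ (univ ×ˢ univ : Finset (Ω × Ω)),
            (Real.sqrt (π p.1 * P p.1 p.2) * |g p.1 - g p.2|) ^ 2 := by
        rw [Finset.sum_product]
        refine Finset.sum_congr rfl fun x _ => Finset.sum_congr rfl fun y _ => ?_
        have hq : 0 ≤ π x * P x y := mul_nonneg (hπ0 x).le (hP0 x y)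
        rw [mul_pow, Real.sq_sqrt hq, sq_abs]
      have h3 : ∑ x, ∑ y, (π x * P x y) * (g x + g y) ^ 2
          = ∑ p ∈ (univ ×ˢ univ : Finset (Ω × Ω)),
            (Real.sqrt (π p.1 * P p.1 p.2) * (g p.1 + g p.2)) ^ 2 := by
        rw [Finset.sum_product]
        refine Finset.sum_congr rfl fun x _ => Finset.sum_congr rfl fun y _ => ?_
        have hq : 0 ≤ π x * P x y := mul_nonneg (hπ0 x).le (hP0 x y)
        rw [mul_pow, Real.sq_sqrt hq]
      rw [h1, h2, h3]
      exact Finset.sum_mul_sq_le_sq_mul_sq _ _ _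
    calc K ^ 2 ≤ (∑ x, ∑ y, (π x * P x y) * (g x - g y) ^ 2)
        * (∑ x, ∑ y, (π x * P x y) * (g x + g y) ^ 2) := key
      _ = (2 * D) * (∑ x, ∑ y, (π x * P x y) * (g x + g y) ^ 2) := by rw [hE2]
      _ ≤ (2 * D) * (4 * N) := mul_le_mul_of_nonneg_left hE3 hE2nonneg
  -- coarea
  have hKlow : 2 * (Φstar * N) ≤ K := by
    have hfilter : univ.filter (fun x => 0 < (fun x => g x ^ 2) x)
        = univ.filter (fun x => 0 < f x) := by
      refine Finset.filter_congr fun x _ => ?_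
      simp only [eq_iff_iff]
      constructor
      · intro hx
        by_contra hfx
        have : g x = 0 := max_eq_right (le_of_not_gt hfx)
        rw [this] at hx
        simp at hx
      · intro hx
        have : g x = f x := max_eq_left hx.le
        rw [this]
        positivity
    have hM := coarea_bound P π Φstar hP0 hπ0 hΦub (fun x => g x ^ 2)
      (fun x => by positivity) (by rw [hfilter]; exact hBhalf)
    have habs : ∀ a b : ℝ, |a - b| = max (a - b) 0 + max (b - a) 0 := by
      intro a b
      rcases le_total a b with hab | hab
      · rw [abs_of_nonpos (by linarith), max_eq_right (by linarith),
          max_eq_left (by linarith)]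
        ring
      · rw [abs_of_nonneg (by linarith), max_eq_left (by linarith),
          max_eq_right (by linarith)]
        ring
    have hswap : ∑ x, ∑ y, (π x * P x y) * max (g y ^ 2 - g x ^ 2) 0
        = ∑ x, ∑ y, (π x * P x y) * max (g x ^ 2 - g y ^ 2) 0 := by
      rw [Finset.sum_comm]
      exact Finset.sum_congr rfl fun y _ => Finset.sum_congr rfl fun x _ => by
        rw [hrev y x]
    have hKsplit : K = 2 * ∑ x, ∑ y, (π x * P x y) * max (g x ^ 2 - g y ^ 2) 0 := by
      rw [hK]
      calc ∑ x, ∑ y, (π x * P x y) * |g x ^ 2 - g y ^ 2|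
          = ∑ x, ∑ y, ((π x * P x y) * max (g x ^ 2 - g y ^ 2) 0
            + (π x * P x y) * max (g y ^ 2 - g x ^ 2) 0) := by
            refine Finset.sum_congr rfl fun x _ => Finset.sum_congr rfl fun y _ => ?_
            rw [habs, mul_add]
        _ = (∑ x, ∑ y, (π x * P x y) * max (g x ^ 2 - g y ^ 2) 0)
            + ∑ x, ∑ y, (π x * P x y) * max (g y ^ 2 - g x ^ 2) 0 := by
            rw [← Finset.sum_add_distrib]
            exact Finset.sum_congr rfl fun x _ => by rw [← Finset.sum_add_distrib]
        _ = 2 * ∑ x, ∑ y, (π x * P x y) * max (g x ^ 2 - g y ^ 2) 0 := by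
            rw [hswap]; ring
    rw [hKsplit, hN]
    have : Φstar * ∑ x, π x * g x ^ 2
        ≤ ∑ x, ∑ y, (π x * P x y) * max (g x ^ 2 - g y ^ 2) 0 := by
      refine le_trans (le_of_eq ?_) hM
      rfl
    linarith
  -- combine
  have hsq : (2 * (Φstar * N)) ^ 2 ≤ K ^ 2 := by
    have h0 : 0 ≤ 2 * (Φstar * N) := by positivity
    exact pow_le_pow_left₀ h0 hKlow 2
  have final : (2 * (Φstar * N)) ^ 2 ≤ (2 * ((1 - lam2) * N)) * (4 * N) := by
    calc (2 * (Φstar * N)) ^ 2 ≤ (2 * D) * (4 * N) := le_trans hsq hCS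
      _ ≤ (2 * ((1 - lam2) * N)) * (4 * N) := by
          have : 2 * D ≤ 2 * ((1 - lam2) * N) := by linarith
          exact mul_le_mul_of_nonneg_right this (by positivity)
  nlinarith [sq_nonneg N, hNpos, mul_pos hNpos hNpos]


/-- Cheeger's inequality: for a reversible irreducible finite chain with
    second largest eigenvalue λ₂ and bottleneck ratio Φ⋆,
    Φ⋆²/2 ≤ 1 − λ₂ ≤ 2Φ⋆. -/
theorem stmt17 {Ω : Type*} [Fintype Ω] [Nonempty Ω] [DecidableEq Ω]
    (P : Ω → Ω → ℝ) (π : Ω → ℝ) (lam2 Φstar : ℝ)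
    (hP0 : ∀ x y, 0 ≤ P x y) (hP1 : ∀ x, ∑ y, P x y = 1)
    (hπ0 : ∀ x, 0 < π x) (hπ1 : ∑ x, π x = 1)
    (hrev : ∀ x y, π x * P x y = π y * P y x)
    (hirr : ∀ x y : Ω, ∃ t : ℕ, 0 < ((Matrix.of P) ^ t) x y)
    -- lam2 is the second largest eigenvalue: it is attained by an eigenfunction
    -- orthogonal to the constants, and dominates all such eigenvalues.
    (heig : ∃ f : Ω → ℝ, f ≠ 0 ∧ (∑ x, π x * f x = 0) ∧
      ∀ x, ∑ y, P x y * f y = lam2 * f x)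
    (hmax : ∀ (lam : ℝ) (f : Ω → ℝ), f ≠ 0 → (∑ x, π x * f x = 0) →
      (∀ x, ∑ y, P x y * f y = lam * f x) → lam ≤ lam2)
    -- Φstar is the bottleneck ratio: the minimum of Q(S,Sᶜ)/π(S) over sets S
    -- with 0 < π(S) ≤ 1/2.
    (hΦub : ∀ S : Finset Ω, 0 < (∑ x ∈ S, π x) → (∑ x ∈ S, π x) ≤ 1 / 2 →
      Φstar ≤ (∑ x ∈ S, ∑ y ∈ Sᶜ, π x * P x y) / ∑ x ∈ S, π x)
    (hΦmem : ∃ S : Finset Ω, 0 < (∑ x ∈ S, π x) ∧ (∑ x ∈ S, π x) ≤ 1 / 2 ∧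
      Φstar = (∑ x ∈ S, ∑ y ∈ Sᶜ, π x * P x y) / ∑ x ∈ S, π x) :
    Φstar ^ 2 / 2 ≤ 1 - lam2 ∧ 1 - lam2 ≤ 2 * Φstar := by
  classical
  -- Φstar is nonneg
  have hΦ0 : 0 ≤ Φstar := by
    obtain ⟨S, hS1, hS2, hS3⟩ := hΦmem
    rw [hS3]
    refine div_nonneg ?_ hS1.le
    exact Finset.sum_nonneg fun x _ => Finset.sum_nonneg fun y _ =>
      mul_nonneg (hπ0 x).le (hP0 x y)
  constructor
  · -- hard direction
    obtain ⟨f, hf0, hfsum, hfeig⟩ := heig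
    have hpos_ne : ∃ x, 0 < f x := by
      by_contra hc
      push_neg at hc
      apply hf0
      funext x
      have h1 : ∀ x, π x * f x ≤ 0 := fun x =>
        mul_nonpos_of_nonneg_of_nonpos (hπ0 x).le (hc x)
      have h2 := (Finset.sum_eq_zero_iff_of_nonpos (fun x _ => h1 x)).mp hfsum x
        (Finset.mem_univ x)
      have := (hπ0 x).ne'
      rcases mul_eq_zero.mp h2 with h | h
      · exact absurd h this
      · exact h
    have hneg_ne : ∃ x, 0 < -f x := by
      by_contra hc
      push_neg at hc
      apply hf0
      funext x
      have h1 : ∀ x, 0 ≤ π x * f x := fun x =>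
        mul_nonneg (hπ0 x).le (by linarith [hc x])
      have h2 := (Finset.sum_eq_zero_iff_of_nonneg (fun x _ => h1 x)).mp hfsum x
        (Finset.mem_univ x)
      have := (hπ0 x).ne'
      rcases mul_eq_zero.mp h2 with h | h
      · exact absurd h this
      · exact h
    have hdisj : Disjoint (univ.filter (fun x => 0 < f x))
        (univ.filter (fun x => 0 < -f x)) := by
      rw [Finset.disjoint_filter]
      intro x _ h1 h2
      linarith
    have hsum2 : (∑ x ∈ univ.filter (fun x => 0 < f x), π x)
        + (∑ x ∈ univ.filter (fun x => 0 < -f x), π x) ≤ 1 := by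
      rw [← Finset.sum_union hdisj, ← hπ1]
      exact Finset.sum_le_sum_of_subset_of_nonneg (Finset.subset_univ _)
        (fun x _ _ => (hπ0 x).le)
    have key : Φstar ^ 2 ≤ 2 * (1 - lam2) := by
      rcases le_or_gt (∑ x ∈ univ.filter (fun x => 0 < f x), π x) (1 / 2) with hle | hgt
      · exact hard_aux P π lam2 Φstar hP0 hP1 hπ0 hrev hΦub hΦ0 f hfeig hpos_ne hle
      · have hle' : (∑ x ∈ univ.filter (fun x => 0 < -f x), π x) ≤ 1 / 2 := by
          linarith
        have hfeig' : ∀ x, ∑ y, P x y * (-f) y = lam2 * (-f) x := by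
          intro x
          have : ∑ y, P x y * (-f) y = -(∑ y, P x y * f y) := by
            rw [← Finset.sum_neg_distrib]
            exact Finset.sum_congr rfl fun y _ => by simp [mul_neg]
          rw [this, hfeig x]
          simp
        exact hard_aux P π lam2 Φstar hP0 hP1 hπ0 hrev hΦub hΦ0 (-f) hfeig'
          (by simpa using hneg_ne) hle'
    linarith
  · -- easy direction
    obtain ⟨S, haS, hhalfS, hΦS⟩ := hΦmem
    set a : ℝ := ∑ x ∈ S, π x with ha
    set c : Ω → ℝ := fun x => if x ∈ S then 1 else 0 with hc
    have hsumc : ∀ w : Ω → ℝ, ∑ x, w x * c x = ∑ x ∈ S, w x := by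
      intro w
      have : ∀ x, w x * c x = if x ∈ S then w x else 0 := by
        intro x
        by_cases hx : x ∈ S <;> simp [hc, hx]
      rw [Finset.sum_congr rfl fun x _ => this x, Finset.sum_ite_mem, Finset.univ_inter]
    have hsumc' : ∀ w : Ω → ℝ, ∑ x, c x * w x = ∑ x ∈ S, w x := by
      intro w
      rw [← hsumc w]
      exact Finset.sum_congr rfl fun x _ => mul_comm _ _
    set f : Ω → ℝ := fun x => c x - a with hf
    have hfsum : ∑ x, π x * f x = 0 := by
      have : ∀ x, π x * f x = π x * c x - π x * a := fun x => by rw [hf]; ring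
      rw [Finset.sum_congr rfl fun x _ => this x, Finset.sum_sub_distrib,
        hsumc π, ← Finset.sum_mul, hπ1, one_mul, ← ha, sub_self]
    have hray := rayleigh_bound P π lam2 hP1 hπ0 hrev
      ⟨_, (heig.choose_spec.1), heig.choose_spec.2.1, heig.choose_spec.2.2⟩
      hmax f hfsum
    -- compute the three key sums
    have hcol : ∀ y, ∑ x, π x * P x y = π y := by
      intro y
      calc ∑ x, π x * P x y = ∑ x, π y * P y x := Finset.sum_congr rfl fun x _ => hrev x y
        _ = π y := by rw [← Finset.mul_sum, hP1, mul_one]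
    set q : ℝ := ∑ x ∈ S, ∑ y ∈ S, π x * P x y with hq
    set QS : ℝ := ∑ x ∈ S, ∑ y ∈ Sᶜ, π x * P x y with hQS
    have hqQS : q + QS = a := by
      rw [hq, hQS, ha, ← Finset.sum_add_distrib]
      refine Finset.sum_congr rfl fun x _ => ?_
      rw [Finset.sum_add_sum_compl S (fun y => π x * P x y), ← Finset.mul_sum, hP1, mul_one]
    have hPc : ∀ x, ∑ y, P x y * c y = ∑ y ∈ S, P x y := fun x => hsumc (fun y => P x y)
    have hPf : ∀ x, ∑ y, P x y * f y = (∑ y ∈ S, P x y) - a := by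
      intro x
      have : ∀ y, P x y * f y = P x y * c y - P x y * a := fun y => by rw [hf]; ring
      rw [Finset.sum_congr rfl fun y _ => this y, Finset.sum_sub_distrib,
        hPc x, ← Finset.sum_mul, hP1, one_mul]
    -- LHS of Rayleigh
    have hA3 : ∑ x, π x * (∑ y ∈ S, P x y) = a := by
      have e : ∀ x, π x * (∑ y ∈ S, P x y) = ∑ y ∈ S, π x * P x y := fun x =>
        Finset.mul_sum _ _ _
      rw [Finset.sum_congr rfl fun x _ => e x, Finset.sum_comm, ha]
      refine Finset.sum_congr rfl fun y hy => hcol y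
    have hq' : ∑ x, π x * c x * (∑ y ∈ S, P x y) = q := by
      rw [hq]
      have e : ∀ x, π x * c x * (∑ y ∈ S, P x y)
          = (π x * (∑ y ∈ S, P x y)) * c x := fun x => by ring
      rw [Finset.sum_congr rfl fun x _ => e x, hsumc (fun x => π x * ∑ y ∈ S, P x y)]
      exact Finset.sum_congr rfl fun x _ => Finset.mul_sum _ _ _
    have hLHS : ∑ x, π x * f x * (∑ y, P x y * f y) = q - a ^ 2 := by
      have e : ∀ x, π x * f x * (∑ y, P x y * f y)
          = π x * c x * (∑ y ∈ S, P x y) - a * (π x * (∑ y ∈ S, P x y))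
            - a * (π x * c x) + a ^ 2 * π x := by
        intro x
        rw [hPf x, hf]
        ring
      rw [Finset.sum_congr rfl fun x _ => e x]
      rw [Finset.sum_add_distrib, Finset.sum_sub_distrib, Finset.sum_sub_distrib]
      rw [hq', ← Finset.mul_sum, ← Finset.mul_sum, hA3, hsumc π, ← Finset.mul_sum, hπ1, ← ha]
      ring
    have hc2 : ∀ x, c x ^ 2 = c x := by
      intro x
      by_cases hx : x ∈ S <;> simp [hc, hx]
    have hRHS : ∑ x, π x * f x ^ 2 = a - a ^ 2 := by
      have e : ∀ x, π x * f x ^ 2 = π x * c x - 2 * a * (π x * c x) + a ^ 2 * π x := by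
        intro x
        rw [hf]
        have : (c x - a) ^ 2 = c x ^ 2 - 2 * a * c x + a ^ 2 := by ring
        rw [mul_comm (π x) ((c x - a)^2), this, hc2 x]
        ring
      rw [Finset.sum_congr rfl fun x _ => e x]
      rw [Finset.sum_add_distrib, Finset.sum_sub_distrib]
      rw [hsumc π, ← Finset.mul_sum, hsumc π, ← Finset.mul_sum, hπ1, ← ha]
      ring
    rw [hLHS, hRHS] at hray
    -- (1 - lam2) * (a - a^2) ≤ QS
    have hkey : (1 - lam2) * (a - a ^ 2) ≤ QS := by nlinarith [hqQS]
    rcases le_or_gt (1 - lam2) 0 with hl | hl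
    · linarith
    · have haa : a / 2 ≤ a - a ^ 2 := by nlinarith
      have h1 : (1 - lam2) * (a / 2) ≤ QS :=
        le_trans (mul_le_mul_of_nonneg_left haa hl.le) hkey
      rw [hΦS]
      rw [show (2 : ℝ) * (QS / a) = (2 * QS) / a from by ring]
      rw [le_div_iff₀ haS]
      linarith
end

section
/- Let P be an ergodic transition kernel on a finite metric space (Ω, dist) and suppose there is a Markovian coupling of two copies of the chain such that for all σ, σ̃ in the same fiber of a P-preserved partition, E[dist(X₁, X̃₁)] ≤ (1 − c/n)·dist(σ, σ̃). Then every eigenvalue λ of P with eigenfunction f that is non-constant on some fiber and has Lipschitz constant lip(f) > 0 (with respect to dist restricted to fibers) satisfies 1 − λ ≥ c/n. -/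
open Finset

/-- If an ergodic kernel P on a finite metric space admits, on each fiber of a
    P-preserved partition, a Markovian coupling contracting the distance by a
    factor (1 − c/n), then every eigenvalue λ whose eigenfunction is
    non-constant on some fiber (i.e. has positive Lipschitz constant over
    fibers) satisfies 1 − λ ≥ c/n. -/
theorem stmt18 {Ω I : Type*} [Fintype Ω]
    (P : Ω → Ω → ℝ) (d : Ω → Ω → ℝ) (fiber : Ω → I)
    (q : Ω → Ω → Ω → Ω → ℝ) (c n : ℝ) (hc : 0 < c) (hn : 0 < n)
    (hP0 : ∀ x y, 0 ≤ P x y) (hP1 : ∀ x, ∑ y, P x y = 1)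
    (hd0 : ∀ x, d x x = 0) (hdsymm : ∀ x y, d x y = d y x)
    (hdpos : ∀ x y, x ≠ y → 0 < d x y)
    (htri : ∀ x y z, d x z ≤ d x y + d y z)
    -- q σ σ' is a coupling of one step of the chain from σ and from σ',
    -- supported on pairs in a common fiber, contracting the distance.
    (hq0 : ∀ σ σ' a b, 0 ≤ q σ σ' a b)
    (hq1 : ∀ σ σ', fiber σ = fiber σ' → ∀ a, ∑ b, q σ σ' a b = P σ a)
    (hq2 : ∀ σ σ', fiber σ = fiber σ' → ∀ b, ∑ a, q σ σ' a b = P σ' b)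
    (hqfib : ∀ σ σ', fiber σ = fiber σ' → ∀ a b, q σ σ' a b ≠ 0 → fiber a = fiber b)
    (hcontr : ∀ σ σ', fiber σ = fiber σ' →
      ∑ a, ∑ b, q σ σ' a b * d a b ≤ (1 - c / n) * d σ σ')
    (lam L : ℝ) (f : Ω → ℝ)
    (heig : ∀ σ, ∑ a, P σ a * f a = lam * f σ)
    -- L = lip(f) > 0 : the Lipschitz constant of f over pairs in a common fiber.
    (hL : 0 < L)
    (hLub : ∀ σ σ', σ ≠ σ' → fiber σ = fiber σ' → |f σ - f σ'| ≤ L * d σ σ')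
    (hLmem : ∃ σ σ', σ ≠ σ' ∧ fiber σ = fiber σ' ∧ |f σ - f σ'| = L * d σ σ') :
    c / n ≤ 1 - lam := by

  obtain ⟨σ, σ', hne, hfib, heq⟩ := hLmem
  have hdpos' : 0 < d σ σ' := hdpos _ _ hne
  have hLd : 0 < L * d σ σ' := mul_pos hL hdpos'
  -- pointwise bound on the double sum
  have hpt : ∀ a b : Ω, q σ σ' a b * |f a - f b| ≤ q σ σ' a b * (L * d a b) := by
    intro a b
    by_cases hq : q σ σ' a b = 0
    · simp [hq]
    · apply mul_le_mul_of_nonneg_left _ (hq0 σ σ' a b)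
      by_cases hab : a = b
      · subst hab; simp [hd0]
      · exact hLub a b hab (hqfib σ σ' hfib a b hq)
  have hrepr : lam * (f σ - f σ') = ∑ a, ∑ b, q σ σ' a b * (f a - f b) := by
    have h1 : ∑ a, P σ a * f a = ∑ a, ∑ b, q σ σ' a b * f a := by
      apply Finset.sum_congr rfl
      intro a _
      rw [← hq1 σ σ' hfib a, Finset.sum_mul]
    have h2 : ∑ b, P σ' b * f b = ∑ b, ∑ a, q σ σ' a b * f b := by
      apply Finset.sum_congr rfl
      intro b _
      rw [← hq2 σ σ' hfib b, Finset.sum_mul]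
    have := heig σ
    have := heig σ'
    simp only [mul_sub]
    rw [← heig σ, ← heig σ', h1, h2,
      show (∑ b, ∑ a, q σ σ' a b * f b) = ∑ a, ∑ b, q σ σ' a b * f b from Finset.sum_comm]
    rw [← Finset.sum_sub_distrib]
    apply Finset.sum_congr rfl
    intro a _
    rw [← Finset.sum_sub_distrib]
  have hbound : |lam| * (L * d σ σ') ≤ (1 - c / n) * (L * d σ σ') := by
    have h0 : |lam| * (L * d σ σ') = |lam * (f σ - f σ')| := by
      rw [abs_mul, heq]
    rw [h0, hrepr]
    calc |∑ a, ∑ b, q σ σ' a b * (f a - f b)|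
        ≤ ∑ a, ∑ b, |q σ σ' a b * (f a - f b)| := by
          apply (Finset.abs_sum_le_sum_abs _ _).trans
          apply Finset.sum_le_sum
          intro a _
          exact Finset.abs_sum_le_sum_abs _ _
      _ ≤ ∑ a, ∑ b, q σ σ' a b * (L * d a b) := by
          apply Finset.sum_le_sum; intro a _
          apply Finset.sum_le_sum; intro b _
          rw [abs_mul, abs_of_nonneg (hq0 σ σ' a b)]
          exact hpt a b
      _ = L * ∑ a, ∑ b, q σ σ' a b * d a b := by
          rw [Finset.mul_sum]
          apply Finset.sum_congr rfl; intro a _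
          rw [Finset.mul_sum]
          apply Finset.sum_congr rfl; intro b _
          ring
      _ ≤ L * ((1 - c / n) * d σ σ') := by
          apply mul_le_mul_of_nonneg_left (hcontr σ σ' hfib) hL.le
      _ = (1 - c / n) * (L * d σ σ') := by ring
  have hlam : |lam| ≤ 1 - c / n := le_of_mul_le_mul_right
    (by linarith [hbound]) hLd
  have := le_abs_self lam
  linarith
end
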